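/- arXiv:1703.10912 — 9 statements merged into one kernel-verified Lean document; each statement's English description precedes it below -/
import Mathlib

section
/- Let X be a set and let (V_i)_{i∈I} be an injective family of nonempty subsets of X which is closed under pairwise intersections up to ∅, i.e., for all i, j ∈ I either V_i ∩ V_j = ∅ or V_i ∩ V_j = V_k for some k ∈ I. Then the family (V_i)_{i∈I} is independent if and only if the indicator functions (1_{V_i})_{i∈I}, regarded as elements of the complex vector space of functions X → ℂ, are linearly independent. -/
open Finset Set

private lemma indicator_union_formula {X : Type*} (A B : Set X) :
    (A ∪ B).indicator (fun _ => (1:ℂ)) =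
      A.indicator (fun _ => (1:ℂ)) + B.indicator (fun _ => (1:ℂ))
        - (A ∩ B).indicator (fun _ => (1:ℂ)) := by
  funext x
  by_cases hA : x ∈ A <;> by_cases hB : x ∈ B <;>
    simp [Set.indicator_apply, hA, hB]

private lemma exA {X I : Type*} (V : I → Set X)
    (hcap : ∀ i j : I, V i ∩ V j = ∅ ∨ ∃ k, V i ∩ V j = V k) :
    ∀ (n : ℕ) (F : Finset I), F.card ≤ n →
      ∃ (s : Finset I) (c : I → ℂ),
        (∑ k ∈ s, c k • (V k).indicator (fun _ => (1:ℂ)))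
          = Set.indicator (⋃ i ∈ F, V i) (fun _ => (1:ℂ)) ∧
        ∀ k ∈ s, ∃ i ∈ F, V k ⊆ V i := by
  classical
  intro n
  induction n with
  | zero =>
    intro F hF
    rw [Nat.le_zero, Finset.card_eq_zero] at hF
    subst hF
    exact ⟨∅, fun _ => 0, by simp; rfl, by simp⟩
  | succ n ih =>
    intro F hF
    rcases F.eq_empty_or_nonempty with rfl | ⟨j, hj⟩
    · exact ⟨∅, fun _ => 0, by simp; rfl, by simp⟩
    set F' := F.erase j with hF'def
    have hcardF' : F'.card ≤ n := by
      have h1 : F'.card = F.card - 1 := Finset.card_erase_of_mem hj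
      have h2 : 0 < F.card := Finset.card_pos.2 ⟨j, hj⟩
      omega
    obtain ⟨s', c', hs', hc'⟩ := ih F' hcardF'
    set kf : I → I := fun i => if h : ∃ k, V j ∩ V i = V k then h.choose else j with hkfdef
    set t := F'.filter (fun i => (V j ∩ V i).Nonempty) with htdef
    have hkft : ∀ i ∈ t, V (kf i) = V j ∩ V i := by
      intro i hit
      rw [Finset.mem_filter] at hit
      rcases hcap j i with h0 | hk
      · exact absurd h0 hit.2.ne_empty
      · simp only [hkfdef]
        rw [dif_pos hk]
        exact hk.choose_spec.symm
    set F'' := t.image kf with hF''def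
    have hcardF'' : F''.card ≤ n := by
      calc F''.card ≤ t.card := Finset.card_image_le
        _ ≤ F'.card := Finset.card_filter_le _ _
        _ ≤ n := hcardF'
    obtain ⟨s'', c'', hs'', hc''⟩ := ih F'' hcardF''
    have hcup : V j ∩ (⋃ i ∈ F', V i) = ⋃ k ∈ F'', V k := by
      ext x
      simp only [Set.mem_inter_iff, Set.mem_iUnion, exists_prop]
      constructor
      · rintro ⟨hxj, i, hi, hxi⟩
        have hit : i ∈ t := Finset.mem_filter.2 ⟨hi, ⟨x, hxj, hxi⟩⟩
        exact ⟨kf i, Finset.mem_image_of_mem _ hit, (hkft i hit).symm ▸ ⟨hxj, hxi⟩⟩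
      · rintro ⟨k, hk, hxk⟩
        obtain ⟨i, hit, rfl⟩ := Finset.mem_image.1 hk
        rw [hkft i hit] at hxk
        exact ⟨hxk.1, i, (Finset.mem_filter.1 hit).1, hxk.2⟩
    have hUnion : (⋃ i ∈ F, V i) = V j ∪ ⋃ i ∈ F', V i := by
      conv_lhs => rw [← Finset.insert_erase hj]
      rw [Finset.set_biUnion_insert]
    refine ⟨insert j (s' ∪ s''),
      fun k => (if k = j then 1 else 0) + (if k ∈ s' then c' k else 0)
        - (if k ∈ s'' then c'' k else 0), ?_, ?_⟩
    · have hsplit : ∀ k : I,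
          ((if k = j then (1:ℂ) else 0) + (if k ∈ s' then c' k else 0)
            - (if k ∈ s'' then c'' k else 0)) • (V k).indicator (fun _ => (1:ℂ))
          = (if k = j then (V k).indicator (fun _ => (1:ℂ)) else 0)
            + (if k ∈ s' then c' k • (V k).indicator (fun _ => (1:ℂ)) else 0)
            - (if k ∈ s'' then c'' k • (V k).indicator (fun _ => (1:ℂ)) else 0) := by
        intro k
        simp [sub_smul, add_smul, ite_smul]
      simp only [hsplit]
      rw [Finset.sum_sub_distrib, Finset.sum_add_distrib]
      have h1 : (∑ k ∈ insert j (s' ∪ s''),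
          if k = j then (V k).indicator (fun _ => (1:ℂ)) else 0)
          = (V j).indicator (fun _ => (1:ℂ)) := by
        rw [Finset.sum_ite_eq' (insert j (s' ∪ s'')) j
          (fun k => (V k).indicator (fun _ => (1:ℂ)))]
        rw [if_pos (Finset.mem_insert_self _ _)]
      have h2 : (∑ k ∈ insert j (s' ∪ s''),
          if k ∈ s' then c' k • (V k).indicator (fun _ => (1:ℂ)) else 0)
          = ∑ k ∈ s', c' k • (V k).indicator (fun _ => (1:ℂ)) := by
        rw [← Finset.sum_subset (fun k hk => Finset.mem_insert_of_mem
            (Finset.mem_union_left _ hk)) (fun k _ hk => if_neg hk)]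
        exact Finset.sum_congr rfl fun k hk => if_pos hk
      have h3 : (∑ k ∈ insert j (s' ∪ s''),
          if k ∈ s'' then c'' k • (V k).indicator (fun _ => (1:ℂ)) else 0)
          = ∑ k ∈ s'', c'' k • (V k).indicator (fun _ => (1:ℂ)) := by
        rw [← Finset.sum_subset (fun k hk => Finset.mem_insert_of_mem
            (Finset.mem_union_right _ hk)) (fun k _ hk => if_neg hk)]
        exact Finset.sum_congr rfl fun k hk => if_pos hk
      rw [h1, h2, h3, hs', hs'', ← hcup, hUnion, indicator_union_formula]
    · intro k hk
      rcases Finset.mem_insert.1 hk with rfl | hk'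
      · exact ⟨k, hj, subset_rfl⟩
      rcases Finset.mem_union.1 hk' with hk'' | hk''
      · obtain ⟨i, hi, hsub⟩ := hc' k hk''
        exact ⟨i, Finset.erase_subset _ _ hi, hsub⟩
      · obtain ⟨m, hm, hsub⟩ := hc'' k hk''
        obtain ⟨i, hit, rfl⟩ := Finset.mem_image.1 hm
        refine ⟨j, hj, hsub.trans ?_⟩
        rw [hkft i hit]
        exact Set.inter_subset_left

/-- For an injective family `(V i)` of nonempty subsets of `X` that is
closed under pairwise intersections up to `∅`, the family is independent (i.e.
`V i₀ = ⋃_{i ∈ F} V i` forces `i₀ ∈ F` for finite `F`) if and only if the indicator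
functions `1_{V i} : X → ℂ` are linearly independent. -/
theorem stmt3 {X I : Type*} (V : I → Set X)
    (hne : ∀ i, (V i).Nonempty) (hinj : Function.Injective V)
    (hcap : ∀ i j : I, V i ∩ V j = ∅ ∨ ∃ k, V i ∩ V j = V k) :
    (∀ (F : Finset I) (i₀ : I), V i₀ = ⋃ i ∈ F, V i → i₀ ∈ F) ↔
      LinearIndependent ℂ (fun i : I => (V i).indicator (fun _ => (1 : ℂ))) := by
  classical
  constructor
  · intro hind
    rw [linearIndependent_iff']
    intro s g hsum i hi
    by_contra hgi
    set s₀ := s.filter (fun i => g i ≠ 0) with hs₀def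
    have hi₀s : i ∈ s₀ := Finset.mem_filter.2 ⟨hi, hgi⟩
    obtain ⟨A, hA, hmax⟩ := (s₀.image V).exists_maximal ⟨V i, Finset.mem_image_of_mem _ hi₀s⟩
    obtain ⟨i₁, hi₁, rfl⟩ := Finset.mem_image.1 hA
    have hmax' : ∀ i' ∈ s₀, V i₁ ⊆ V i' → V i' = V i₁ := by
      intro i' hi' hsub
      by_contra hne'
      exact hne' (Set.Subset.antisymm (hmax (Finset.mem_image_of_mem _ hi') hsub) hsub)
    -- find x ∈ V i₁ not in any other V i', i' ∈ s₀
    have hx : ∃ x ∈ V i₁, ∀ i' ∈ s₀.erase i₁, x ∉ V i' := by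
      by_contra hcon
      push_neg at hcon
      set kf : I → I := fun i' => if h : ∃ k, V i₁ ∩ V i' = V k then h.choose else i₁
        with hkfdef
      set t := (s₀.erase i₁).filter (fun i' => (V i₁ ∩ V i').Nonempty) with htdef
      have hkft : ∀ i' ∈ t, V (kf i') = V i₁ ∩ V i' := by
        intro i' hit
        rw [Finset.mem_filter] at hit
        rcases hcap i₁ i' with h0 | hk
        · exact absurd h0 hit.2.ne_empty
        · simp only [hkfdef]
          rw [dif_pos hk]
          exact hk.choose_spec.symm
      set F := t.image kf with hFdef
      have hUeq : V i₁ = ⋃ k ∈ F, V k := by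
        apply Set.Subset.antisymm
        · intro x hxV
          obtain ⟨i', hi', hxi'⟩ := hcon x hxV
          have hit : i' ∈ t := Finset.mem_filter.2 ⟨hi', ⟨x, hxV, hxi'⟩⟩
          simp only [Set.mem_iUnion, exists_prop]
          exact ⟨kf i', Finset.mem_image_of_mem _ hit, (hkft i' hit).symm ▸ ⟨hxV, hxi'⟩⟩
        · intro x hxU
          simp only [Set.mem_iUnion, exists_prop] at hxU
          obtain ⟨k, hk, hxk⟩ := hxU
          obtain ⟨i', hit, rfl⟩ := Finset.mem_image.1 hk
          rw [hkft i' hit] at hxk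
          exact hxk.1
      have hi₁F := hind F i₁ hUeq
      obtain ⟨i', hit, hkfi⟩ := Finset.mem_image.1 hi₁F
      have heq : V i₁ ∩ V i' = V i₁ := by rw [← hkft i' hit, hkfi]
      have hsub : V i₁ ⊆ V i' := by
        intro x hxV; have : x ∈ V i₁ ∩ V i' := heq.symm ▸ hxV; exact this.2
      have hi's₀ : i' ∈ s₀ := Finset.mem_of_mem_erase (Finset.mem_filter.1 hit).1
      have := hmax' i' hi's₀ hsub
      have : i' = i₁ := hinj this
      exact (Finset.ne_of_mem_erase (Finset.mem_filter.1 hit).1) this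
    obtain ⟨x, hxV, hxnot⟩ := hx
    have hev := congrFun hsum x
    rw [Finset.sum_apply] at hev
    rw [Finset.sum_eq_single i₁ (fun b hb hbne => ?_) (fun h => absurd (Finset.mem_filter.1 hi₁).1 h)] at hev
    · simp only [Pi.smul_apply, Set.indicator_of_mem hxV, smul_eq_mul, mul_one,
        Pi.zero_apply] at hev
      exact (Finset.mem_filter.1 hi₁).2 hev
    · by_cases hgb : g b = 0
      · simp [hgb]
      · have hbs₀ : b ∈ s₀.erase i₁ :=
          Finset.mem_erase.2 ⟨hbne, Finset.mem_filter.2 ⟨hb, hgb⟩⟩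
        simp [Set.indicator_of_notMem (hxnot b hbs₀)]
  · intro hli F i₀ hU
    by_contra hi₀F
    obtain ⟨s, c, hsum, hsupp⟩ := exA V hcap F.card F le_rfl
    have hi₀s : i₀ ∉ s := by
      intro h
      obtain ⟨i, hiF, hsub⟩ := hsupp i₀ h
      have hsub' : V i ⊆ V i₀ := by
        rw [hU]; exact Set.subset_biUnion_of_mem hiF
      have : V i = V i₀ := Set.Subset.antisymm hsub' hsub
      exact hi₀F (hinj this ▸ hiF)
    rw [linearIndependent_iff'] at hli
    set g : I → ℂ := fun k => (if k = i₀ then 1 else 0) - (if k ∈ s then c k else 0)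
      with hgdef
    have hsum0 : ∑ k ∈ insert i₀ s,
        g k • (V k).indicator (fun _ => (1:ℂ)) = 0 := by
      simp only [hgdef, sub_smul, ite_smul, one_smul, zero_smul]
      rw [Finset.sum_sub_distrib]
      have h1 : (∑ k ∈ insert i₀ s,
          if k = i₀ then (V k).indicator (fun _ => (1:ℂ)) else 0)
          = (V i₀).indicator (fun _ => (1:ℂ)) := by
        rw [Finset.sum_ite_eq' (insert i₀ s) i₀
          (fun k => (V k).indicator (fun _ => (1:ℂ)))]
        rw [if_pos (Finset.mem_insert_self _ _)]
      have h2 : (∑ k ∈ insert i₀ s,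
          if k ∈ s then c k • (V k).indicator (fun _ => (1:ℂ)) else 0)
          = ∑ k ∈ s, c k • (V k).indicator (fun _ => (1:ℂ)) := by
        rw [← Finset.sum_subset (Finset.subset_insert _ _) (fun k _ hk => if_neg hk)]
        exact Finset.sum_congr rfl fun k hk => if_pos hk
      rw [h1, h2, hsum, ← hU, sub_self]
    have := hli (insert i₀ s) g hsum0 i₀ (Finset.mem_insert_self _ _)
    rw [hgdef] at this
    simp only [if_pos rfl, if_neg hi₀s] at this
    norm_num at this
end

section
/- Let X be a set and let (V_i)_{i∈J} be a finite injective family of nonempty subsets of X which is independent and closed under pairwise intersections up to ∅ (for all i, j ∈ J either V_i ∩ V_j = ∅ or V_i ∩ V_j = V_k for some k ∈ J). For each i ∈ J define V′_i := V_i \ ⋃{V_j : j ∈ J, V_j ⊊ V_i}. Then: (a) each V′_i is nonempty; (b) the sets V′_i, i ∈ J, are pairwise disjoint; (c) for every j ∈ J one has V_j = ⋃{V′_i : i ∈ J, V_i ⊆ V_j}; consequently the J × J integer matrix Γ = (γ_{ij}) with γ_{ij} = 1 if V_i ⊆ V_j and γ_{ij} = 0 otherwise satisfies 1_{V_j} =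 ∑_{i∈J} γ_{ij} 1_{V′_i}, and Γ is unipotent (a permutation of the index set makes it upper triangular with 1's on the diagonal), hence invertible over ℤ. -/
/-- Let `(V i)_{i ∈ J}` be a finite injective independent family of nonempty
subsets of `X`, closed under pairwise intersections up to `∅`. With
`V′ i = V i \ ⋃ {V j : V j ⊊ V i}` and the integer matrix `Γ i j = if V i ⊆ V j then 1 else 0`:
(a) each `V′ i` is nonempty; (b) the `V′ i` are pairwise disjoint;
(c) `V j = ⋃ {V′ i : V i ⊆ V j}`, and `1_{V j} = ∑ i, Γ i j • 1_{V′ i}`;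
moreover `Γ` is unipotent (after a reordering of `J` it is upper triangular with `1`s on
the diagonal) and invertible over `ℤ`. -/
theorem stmt4 {X J : Type*} [Fintype J] [DecidableEq J] (V : J → Set X)
    (hne : ∀ i, (V i).Nonempty) (hinj : Function.Injective V)
    (hcap : ∀ i j : J, V i ∩ V j = ∅ ∨ ∃ k, V i ∩ V j = V k)
    (hindep : ∀ (F : Finset J) (i₀ : J), V i₀ = ⋃ i ∈ F, V i → i₀ ∈ F)
    (V' : J → Set X)
    (hV' : ∀ i, V' i = V i \ ⋃ (j : J) (_ : V j ⊂ V i), V j)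
    (Γ : Matrix J J ℤ)
    (hΓ1 : ∀ i j, V i ⊆ V j → Γ i j = 1)
    (hΓ0 : ∀ i j, ¬ V i ⊆ V j → Γ i j = 0) :
    (∀ i, (V' i).Nonempty) ∧
    (∀ i j, i ≠ j → V' i ∩ V' j = ∅) ∧
    (∀ j, V j = ⋃ (i : J) (_ : V i ⊆ V j), V' i) ∧
    (∀ (j : J) (x : X), (V j).indicator (fun _ => (1 : ℤ)) x =
      ∑ i : J, Γ i j * (V' i).indicator (fun _ => (1 : ℤ)) x) ∧
    (∃ e : J ≃ Fin (Fintype.card J),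
      (∀ i, Γ i i = 1) ∧ ∀ i j, e j < e i → Γ i j = 0) ∧
    IsUnit Γ := by
  classical
  have hsub' : ∀ i, V' i ⊆ V i := fun i => by rw [hV']; exact Set.diff_subset
  -- (a)
  have ha : ∀ i, (V' i).Nonempty := by
    intro i
    rw [hV' i]
    by_contra h
    rw [Set.not_nonempty_iff_eq_empty, Set.diff_eq_empty] at h
    have heq : V i = ⋃ j ∈ Finset.univ.filter (fun j => V j ⊂ V i), V j := by
      apply Set.Subset.antisymm
      · intro x hx
        have hx' := h hx
        simp only [Set.mem_iUnion] at hx'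
        obtain ⟨j, hj, hxj⟩ := hx'
        simp only [Set.mem_iUnion, Finset.mem_filter, Finset.mem_univ, true_and]
        exact ⟨j, hj, hxj⟩
      · intro x hx
        simp only [Set.mem_iUnion, Finset.mem_filter, Finset.mem_univ, true_and] at hx
        obtain ⟨j, hj, hxj⟩ := hx
        exact hj.subset hxj
    have := hindep _ i heq
    simp only [Finset.mem_filter, Finset.mem_univ, true_and] at this
    exact ssubset_irrefl _ this
  -- (b)
  have hb : ∀ i j, i ≠ j → V' i ∩ V' j = ∅ := by
    intro i j hij
    by_contra h
    obtain ⟨x, hxi, hxj⟩ := Set.nonempty_iff_ne_empty.2 h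
    have hxVi := hsub' i hxi
    have hxVj := hsub' j hxj
    rcases hcap i j with hc | ⟨k, hk⟩
    · exact absurd hc (Set.nonempty_iff_ne_empty.1 ⟨x, hxVi, hxVj⟩)
    · have hxk : x ∈ V k := hk ▸ (⟨hxVi, hxVj⟩ : x ∈ V i ∩ V j)
      have hki : V k ⊆ V i := hk ▸ Set.inter_subset_left
      have hkj : V k ⊆ V j := hk ▸ Set.inter_subset_right
      have notss : ∀ m l, x ∈ V' l → ¬ (V m ⊂ V l) ∨ x ∉ V m := by
        intro m l hxl
        by_contra hcon
        push_neg at hcon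
        have := (hV' l ▸ hxl).2
        exact this (Set.mem_iUnion.2 ⟨m, Set.mem_iUnion.2 ⟨hcon.1, hcon.2⟩⟩)
      have h1 : V k = V i := by
        rcases notss k i hxi with hns | hnx
        · by_contra hne'
          exact hns (hki.ssubset_of_ne hne')
        · exact absurd hxk hnx
      have h2 : V k = V j := by
        rcases notss k j hxj with hns | hnx
        · by_contra hne'
          exact hns (hkj.ssubset_of_ne hne')
        · exact absurd hxk hnx
      exact hij (hinj (h1 ▸ h2))
  -- (c)
  have hc : ∀ j, V j = ⋃ (i : J) (_ : V i ⊆ V j), V' i := by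
    intro j
    apply Set.Subset.antisymm
    · intro x hx
      set S : Finset J := Finset.univ.filter (fun i => x ∈ V i ∧ V i ⊆ V j) with hS
      have hjS : j ∈ S := by simp [hS, hx]
      have hTne : (S.image V).Nonempty := ⟨V j, Finset.mem_image_of_mem V hjS⟩
      obtain ⟨W, hWT, hWmin⟩ : ∃ m ∈ S.image V, ∀ y ∈ S.image V, ¬y < m := by
        obtain ⟨m, hm⟩ := Finset.exists_minimal hTne
        exact ⟨m, hm.1, fun y hy hlt => lt_irrefl _ (hlt.trans_le (hm.2 hy hlt.le))⟩
      obtain ⟨i, hiS, hiW⟩ := Finset.mem_image.1 hWT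
      simp only [hS, Finset.mem_filter, Finset.mem_univ, true_and] at hiS
      have hxVi' : x ∈ V' i := by
        rw [hV' i]
        refine ⟨hiS.1, ?_⟩
        intro hxU
        obtain ⟨k, hk⟩ := Set.mem_iUnion.1 hxU
        obtain ⟨hks, hxk⟩ := Set.mem_iUnion.1 hk
        have hkS : k ∈ S := by
          simp only [hS, Finset.mem_filter, Finset.mem_univ, true_and]
          exact ⟨hxk, hks.subset.trans hiS.2⟩
        exact hWmin (V k) (Finset.mem_image_of_mem V hkS) (hiW ▸ hks)
      exact Set.mem_iUnion.2 ⟨i, Set.mem_iUnion.2 ⟨hiS.2, hxVi'⟩⟩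
    · intro x hx
      obtain ⟨i, hi⟩ := Set.mem_iUnion.1 hx
      obtain ⟨hij, hxi⟩ := Set.mem_iUnion.1 hi
      exact hij (hsub' i hxi)
  -- (d) indicator
  have hd : ∀ (j : J) (x : X), (V j).indicator (fun _ => (1 : ℤ)) x =
      ∑ i : J, Γ i j * (V' i).indicator (fun _ => (1 : ℤ)) x := by
    intro j x
    by_cases hx : x ∈ V j
    · have hx' := hc j ▸ hx
      obtain ⟨i₀, hi₀⟩ := Set.mem_iUnion.1 hx'
      obtain ⟨hi₀j, hxi₀⟩ := Set.mem_iUnion.1 hi₀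
      rw [Finset.sum_eq_single i₀]
      · rw [Set.indicator_of_mem hx, Set.indicator_of_mem hxi₀, hΓ1 i₀ j hi₀j]
        ring
      · intro b _ hb'
        by_cases hbj : V b ⊆ V j
        · by_cases hxb : x ∈ V' b
          · exfalso
            have := hb b i₀ hb'
            exact absurd this (Set.nonempty_iff_ne_empty.1 ⟨x, hxb, hxi₀⟩)
          · simp [Set.indicator_of_notMem hxb]
        · simp [hΓ0 b j hbj]
      · intro h; exact absurd (Finset.mem_univ i₀) h
    · rw [Set.indicator_of_notMem hx]
      symm
      apply Finset.sum_eq_zero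
      intro i _
      by_cases hij : V i ⊆ V j
      · have : x ∉ V' i := fun h => hx (hij (hsub' i h))
        simp [Set.indicator_of_notMem this]
      · simp [hΓ0 i j hij]
  -- unipotent
  have hdiag : ∀ i, Γ i i = 1 := fun i => hΓ1 i i subset_rfl
  let e0 := Fintype.equivFin J
  let rank : J → ℕ := fun i => (Finset.univ.filter (fun k => V k ⊆ V i)).card
  have hrank : ∀ i j, V i ⊂ V j → rank i < rank j := by
    intro i j hij
    apply Finset.card_lt_card
    constructor
    · intro k hk
      simp only [Finset.mem_filter, Finset.mem_univ, true_and] at hk ⊢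
      exact hk.trans hij.subset
    · intro hcon
      have := hcon (by simp : j ∈ Finset.univ.filter (fun k => V k ⊆ V j))
      simp only [Finset.mem_filter, Finset.mem_univ, true_and] at this
      exact hij.not_subset this
  let f : J → ℕ ×ₗ (Fin (Fintype.card J)) := fun i => toLex (rank i, e0 i)
  have hfinj : Function.Injective f := by
    intro a b hab
    have : (rank a, e0 a) = (rank b, e0 b) := by
      simpa [f] using congrArg ofLex hab
    exact e0.injective (congrArg Prod.snd this)
  letI : LinearOrder J := LinearOrder.lift' f hfinj
  have hmono : ∀ i j : J, V i ⊂ V j → i < j := by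
    intro i j hij
    show f i < f j
    exact Prod.Lex.lt_iff.2 (Or.inl (hrank i j hij))
  let e : J ≃o Fin (Fintype.card J) := (monoEquivOfFin J rfl).symm
  have hkey : ∀ i j : J, e j < e i → Γ i j = 0 := by
    intro i j hlt
    by_contra hΓne
    have hsubij : V i ⊆ V j := by
      by_contra hns
      exact hΓne (hΓ0 i j hns)
    rcases eq_or_ne i j with rfl | hne'
    · exact lt_irrefl _ hlt
    · have : i < j := hmono i j (hsubij.ssubset_of_ne (fun h => hne' (hinj h)))
      have : e i < e j := e.strictMono this
      exact absurd hlt (not_lt.2 this.le)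
  refine ⟨ha, hb, hc, hd, ⟨e.toEquiv, hdiag, hkey⟩, ?_⟩
  -- invertibility
  rw [Matrix.isUnit_iff_isUnit_det]
  have hdet : Γ.det = 1 := by
    have hM : (Γ.submatrix ⇑e.symm.toEquiv ⇑e.symm.toEquiv).BlockTriangular id := by
      intro a b hab
      apply hkey
      simpa using hab
    have := Matrix.det_of_upperTriangular hM
    rw [Matrix.det_submatrix_equiv_self] at this
    rw [this]
    simp only [Matrix.submatrix_apply]
    exact Finset.prod_eq_one (fun a _ => hdiag _)
  rw [hdet]
  exact isUnit_one
end

section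
/- Let G be a countable discrete group acting by homeomorphisms on a totally disconnected locally compact Hausdorff space Ω such that the action is minimal, i.e., for every nonempty open subset U ⊆ Ω one has Ω = ⋃_{g∈G} gU, and suppose there exists a nonzero G-invariant regular Borel measure on Ω which is finite on compact sets. Then Ω admits a G-invariant regular basis for its compact open subsets if and only if Ω carries the discrete topology. -/
open Pointwise MeasureTheory

/-- A family `𝒱` of subsets of `Ω` generates the collection of all compact open subsets
of `Ω` if every collection of subsets containing `𝒱` and closed under (binary)
intersections, unions and set differences contains every compact open subset of `Ω`. -/
def GeneratesCompactOpens {Ω : Type*} [TopologicalSpace Ω] (𝒱 : Set (Set Ω)) : Prop :=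
  ∀ 𝒰 : Set (Set Ω), 𝒱 ⊆ 𝒰 →
    (∀ U ∈ 𝒰, ∀ W ∈ 𝒰, U ∩ W ∈ 𝒰) →
    (∀ U ∈ 𝒰, ∀ W ∈ 𝒰, U ∪ W ∈ 𝒰) →
    (∀ U ∈ 𝒰, ∀ W ∈ 𝒰, U \ W ∈ 𝒰) →
    ∀ U : Set Ω, IsCompact U → IsOpen U → U ∈ 𝒰

/-- A family of sets is independent if a member which is a finite union of members
already occurs among them: `V₀ = ⋃_{V ∈ F} V` with `F` a finite subfamily forces
`V₀ ∈ F`. -/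
def IndependentFamilyOfSets {X : Type*} (𝒱 : Set (Set X)) : Prop :=
  ∀ F : Finset (Set X), ↑F ⊆ 𝒱 → ∀ V₀ ∈ 𝒱, V₀ = ⋃ V ∈ F, V → V₀ ∈ F

/-- A regular basis for the compact open subsets of `Ω`: an independent family of
nonempty compact open subsets, closed under pairwise intersections up to `∅`, which
generates the collection of all compact open subsets of `Ω`. -/
def IsRegularBasis {Ω : Type*} [TopologicalSpace Ω] (𝒱 : Set (Set Ω)) : Prop :=
  (∀ V ∈ 𝒱, V.Nonempty ∧ IsCompact V ∧ IsOpen V) ∧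
  IndependentFamilyOfSets 𝒱 ∧
  (∀ V ∈ 𝒱, ∀ W ∈ 𝒱, V ∩ W = ∅ ∨ V ∩ W ∈ 𝒱) ∧
  GeneratesCompactOpens 𝒱

/-- If a countable discrete group `G` acts minimally by homeomorphisms on a
totally disconnected locally compact Hausdorff space `Ω` admitting a nonzero `G`-invariant
regular Borel measure (finite on compact sets), then `Ω` has a `G`-invariant regular basis
for its compact open subsets if and only if `Ω` is discrete. -/
theorem stmt5 {G Ω : Type*} [Group G] [Countable G]
    [TopologicalSpace Ω] [LocallyCompactSpace Ω] [T2Space Ω] [TotallyDisconnectedSpace Ω]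
    [MeasurableSpace Ω] [BorelSpace Ω]
    [MulAction G Ω] (hcont : ∀ g : G, Continuous fun x : Ω => g • x)
    (hmin : ∀ U : Set Ω, IsOpen U → U.Nonempty → (⋃ g : G, g • U) = Set.univ)
    (μ : Measure Ω) (hμ0 : μ ≠ 0) (hreg : μ.Regular)
    (hinv : ∀ (g : G) (s : Set Ω), μ (g • s) = μ s) :
    (∃ 𝒱 : Set (Set Ω), IsRegularBasis 𝒱 ∧ ∀ (g : G), ∀ V ∈ 𝒱, g • V ∈ 𝒱) ↔
      DiscreteTopology Ω := by
  classical
  -- Ω is nonempty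
  have hΩne : Nonempty Ω := by
    by_contra h
    apply hμ0
    rw [← Measure.measure_univ_eq_zero]
    rw [Set.univ_eq_empty_iff.mpr (by simpa using h)]
    exact measure_empty
  -- translates of open sets are open
  have hsmulopen : ∀ (g : G) (s : Set Ω), IsOpen s → IsOpen (g • s) := by
    intro g s hs
    have : g • s = (fun x : Ω => g⁻¹ • x) ⁻¹' s := by
      ext x; simp [Set.mem_smul_set_iff_inv_smul_mem]
    rw [this]; exact hs.preimage (hcont g⁻¹)
  constructor
  · rintro ⟨𝒱, ⟨hmem, hind, hint, hgen⟩, hGinv⟩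
    by_cases hiso : ∃ x : Ω, IsOpen ({x} : Set Ω)
    · -- an isolated point plus minimality gives discreteness
      obtain ⟨x, hx⟩ := hiso
      rw [discreteTopology_iff_isOpen_singleton]
      intro a
      have hu := hmin {x} hx ⟨x, rfl⟩
      have ha : a ∈ ⋃ g : G, g • ({x} : Set Ω) := by rw [hu]; trivial
      obtain ⟨g, hg⟩ := Set.mem_iUnion.mp ha
      rw [Set.smul_set_singleton] at hg
      have : ({a} : Set Ω) = g • ({x} : Set Ω) := by
        rw [Set.smul_set_singleton]
        simp_all
      rw [this]
      exact hsmulopen g _ hx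
    · exfalso
      push_neg at hiso
      haveI := hreg.toIsFiniteMeasureOnCompacts
      -- nonempty open sets have positive measure
      have hpos : ∀ U : Set Ω, IsOpen U → U.Nonempty → 0 < μ U := by
        intro U hUo hUne
        rcases eq_or_lt_of_le (zero_le : 0 ≤ μ U) with h | h
        · exfalso
          apply hμ0
          rw [← Measure.measure_univ_eq_zero, ← hmin U hUo hUne]
          refine le_antisymm (le_trans (measure_iUnion_le _) ?_) zero_le
          simp [hinv, ← h]
        · exact h
      -- 𝒱 is nonempty
      obtain ⟨x0⟩ := hΩne
      have hV0 : ∃ V, V ∈ 𝒱 := by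
        by_contra h
        push_neg at h
        obtain ⟨K0, hK0c, hxint, _⟩ := exists_compact_subset isOpen_univ (Set.mem_univ x0)
        obtain ⟨C, hCclo, hxC, hCsub⟩ :=
          (loc_compact_Haus_tot_disc_of_zero_dim (H := Ω)).mem_nhds_iff.mp
            (isOpen_interior.mem_nhds hxint)
        have hCcomp : IsCompact C :=
          hK0c.of_isClosed_subset hCclo.1 (hCsub.trans interior_subset)
        have : C ∈ ({∅} : Set (Set Ω)) := by
          refine hgen {∅} ?_ ?_ ?_ ?_ C hCcomp hCclo.2
          · intro V hV; exact (h V hV).elim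
          all_goals simp +contextual [Set.subset_def]
        simp only [Set.mem_singleton_iff] at this
        rw [this] at hxC
        exact hxC
      obtain ⟨V, hV⟩ := hV0
      -- Claim C : every member is contained in a translate of every member
      have claimC : ∀ A ∈ 𝒱, ∀ B ∈ 𝒱, ∃ g : G, A ⊆ g • B := by
        intro A hA B hB
        have hAc := (hmem A hA).2.1
        have hBo := (hmem B hB).2.2
        have hBne := (hmem B hB).1
        have hcov : A ⊆ ⋃ g : G, g • B := by
          rw [hmin B hBo hBne]; exact Set.subset_univ A
        obtain ⟨T, hT⟩ := hAc.elim_finite_subcover (fun g : G => g • B)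
          (fun g => hsmulopen g B hBo) hcov
        have hFsub : ↑((T.image fun g => A ∩ g • B).filter (fun s => s ≠ ∅)) ⊆ 𝒱 := by
          intro s hs
          obtain ⟨hs1, hne⟩ := Finset.mem_filter.mp (Finset.mem_coe.mp hs)
          obtain ⟨g, _, rfl⟩ := Finset.mem_image.mp hs1
          rcases hint A hA (g • B) (hGinv g B hB) with h | h
          · exact absurd h hne
          · exact h
        have hAeq : A = ⋃ s ∈ (T.image fun g => A ∩ g • B).filter (fun s => s ≠ ∅), s := by
          apply Set.Subset.antisymm
          · intro y hy
            obtain ⟨g, hgT, hgy⟩ := Set.mem_iUnion₂.mp (hT hy)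
            have hmemF : A ∩ g • B ∈ (T.image fun g => A ∩ g • B).filter (fun s => s ≠ ∅) :=
              Finset.mem_filter.mpr ⟨Finset.mem_image.mpr ⟨g, hgT, rfl⟩,
                Set.nonempty_iff_ne_empty.mp ⟨y, hy, hgy⟩⟩
            exact Set.mem_biUnion hmemF (Set.mem_inter hy hgy)
          · refine Set.iUnion₂_subset fun s hs => ?_
            obtain ⟨hs1, -⟩ := Finset.mem_filter.mp hs
            obtain ⟨g, -, rfl⟩ := Finset.mem_image.mp hs1
            exact Set.inter_subset_left
        have hmemF := hind _ hFsub A hA hAeq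
        obtain ⟨hs1, -⟩ := Finset.mem_filter.mp hmemF
        obtain ⟨g, -, hEq⟩ := Finset.mem_image.mp hs1
        exact ⟨g, by rw [← hEq]; exact Set.inter_subset_right⟩
      -- all members have the same measure
      have hμeq : ∀ A ∈ 𝒱, ∀ B ∈ 𝒱, μ A = μ B := by
        have key : ∀ A ∈ 𝒱, ∀ B ∈ 𝒱, μ A ≤ μ B := by
          intro A hA B hB
          obtain ⟨g, hg⟩ := claimC A hA B hB
          calc μ A ≤ μ (g • B) := measure_mono hg
            _ = μ B := hinv g B
        exact fun A hA B hB => le_antisymm (key A hA B hB) (key B hB A hA)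
      -- no strict inclusions between members
      have hanti : ∀ A ∈ 𝒱, ∀ B ∈ 𝒱, A ⊆ B → A = B := by
        intro A hA B hB hAB
        by_contra hne
        have hBA : (B \ A).Nonempty := by
          obtain ⟨y, hyB, hyA⟩ := Set.exists_of_ssubset (hAB.ssubset_of_ne hne)
          exact ⟨y, hyB, hyA⟩
        have hBAo : IsOpen (B \ A) :=
          (hmem B hB).2.2.sdiff ((hmem A hA).2.1.isClosed)
        have h1 : 0 < μ (B \ A) := hpos _ hBAo hBA
        have h2 : μ (B \ A) = μ B - μ A :=
          measure_diff hAB ((hmem A hA).2.2.measurableSet.nullMeasurableSet)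
            ((hmem A hA).2.1.measure_lt_top.ne)
        rw [h2, hμeq A hA B hB, tsub_self] at h1
        exact lt_irrefl _ h1
      -- distinct members are disjoint
      have hdisj : ∀ A ∈ 𝒱, ∀ B ∈ 𝒱, A ≠ B → A ∩ B = ∅ := by
        intro A hA B hB hne
        rcases hint A hA B hB with h | h
        · exact h
        · exfalso
          have h1 : A ∩ B = A := hanti _ h A hA Set.inter_subset_left
          have h2 : A ⊆ B := by rw [← h1]; exact Set.inter_subset_right
          exact hne (hanti A hA B hB h2)
      -- find a nonempty compact open proper subset K of V
      obtain ⟨x, hxV⟩ := (hmem V hV).1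
      have hVo := (hmem V hV).2.2
      have hVne2 : ∃ y ∈ V, y ≠ x := by
        by_contra h
        push_neg at h
        have : V = {x} := Set.Subset.antisymm (fun y hy => h y hy) (by simpa using hxV)
        exact hiso x (this ▸ hVo)
      obtain ⟨y, hyV, hyx⟩ := hVne2
      have hUo : IsOpen (V \ {y}) := hVo.sdiff isClosed_singleton
      have hxU : x ∈ V \ {y} := ⟨hxV, by simp [Ne.symm hyx]⟩
      obtain ⟨K0, hK0c, hxint, hK0sub⟩ := exists_compact_subset hUo hxU
      obtain ⟨K, hKclo, hxK, hKsub⟩ :=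
        (loc_compact_Haus_tot_disc_of_zero_dim (H := Ω)).mem_nhds_iff.mp
          (isOpen_interior.mem_nhds hxint)
      have hKcomp : IsCompact K :=
        hK0c.of_isClosed_subset hKclo.1 (hKsub.trans interior_subset)
      have hKV : K ⊆ V := fun z hz =>
        (hK0sub (interior_subset (hKsub hz))).1
      have hKneV : K ≠ V := by
        intro h
        have : y ∈ K := h ▸ hyV
        exact (hK0sub (interior_subset (hKsub this))).2 rfl
      -- the collection of finite unions of members contradicts generation
      have hK𝒰 : ∃ F : Finset (Set Ω), ↑F ⊆ 𝒱 ∧ K = ⋃₀ ↑F := by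
        refine hgen {U : Set Ω | ∃ F : Finset (Set Ω), ↑F ⊆ 𝒱 ∧ U = ⋃₀ ↑F}
          ?_ ?_ ?_ ?_ K hKcomp hKclo.2
        · intro A hA
          exact ⟨{A}, by simpa using hA, by simp⟩
        · rintro U ⟨F1, hF1, rfl⟩ W ⟨F2, hF2, rfl⟩
          refine ⟨F1 ∩ F2, ?_, ?_⟩
          · intro s hs
            exact hF1 (Finset.mem_coe.mpr
              (Finset.mem_of_mem_inter_left (Finset.mem_coe.mp hs)))
          · ext z
            simp only [Set.mem_inter_iff, Set.mem_sUnion, Finset.mem_coe,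
              Finset.mem_inter]
            constructor
            · rintro ⟨⟨A, hAF1, hzA⟩, ⟨B, hBF2, hzB⟩⟩
              have hAB : A = B := by
                by_contra hne
                have hd := hdisj A (hF1 hAF1) B (hF2 hBF2) hne
                have : z ∈ A ∩ B := ⟨hzA, hzB⟩
                rw [hd] at this
                exact this
              exact ⟨A, ⟨hAF1, hAB ▸ hBF2⟩, hzA⟩
            · rintro ⟨A, ⟨h1, h2⟩, hzA⟩
              exact ⟨⟨A, h1, hzA⟩, ⟨A, h2, hzA⟩⟩
        · rintro U ⟨F1, hF1, rfl⟩ W ⟨F2, hF2, rfl⟩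
          refine ⟨F1 ∪ F2, ?_, ?_⟩
          · rw [Finset.coe_union]; exact Set.union_subset hF1 hF2
          · rw [Finset.coe_union, Set.sUnion_union]
        · rintro U ⟨F1, hF1, rfl⟩ W ⟨F2, hF2, rfl⟩
          refine ⟨F1 \ F2, ?_, ?_⟩
          · intro s hs
            exact hF1 (Finset.mem_coe.mpr
              ((Finset.mem_sdiff.mp (Finset.mem_coe.mp hs)).1))
          · ext z
            simp only [Set.mem_diff, Set.mem_sUnion, Finset.mem_coe, Finset.mem_sdiff]
            constructor
            · rintro ⟨⟨A, hAF1, hzA⟩, hz2⟩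
              refine ⟨A, ⟨hAF1, fun hAF2 => hz2 ⟨A, hAF2, hzA⟩⟩, hzA⟩
            · rintro ⟨A, ⟨hAF1, hAF2⟩, hzA⟩
              refine ⟨⟨A, hAF1, hzA⟩, ?_⟩
              rintro ⟨B, hBF2, hzB⟩
              have hAB : A = B := by
                by_contra hne
                have hd := hdisj A (hF1 hAF1) B (hF2 hBF2) hne
                have : z ∈ A ∩ B := ⟨hzA, hzB⟩
                rw [hd] at this
                exact this
              exact hAF2 (hAB ▸ hBF2)
      obtain ⟨F, hFsub, hKeq⟩ := hK𝒰
      have hxK' : x ∈ ⋃₀ (↑F : Set (Set Ω)) := hKeq ▸ hxK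
      obtain ⟨A, hAF, hxA⟩ := Set.mem_sUnion.mp hxK'
      have hAK : A ⊆ K := by rw [hKeq]; exact Set.subset_sUnion_of_mem hAF
      have hAV : A = V := hanti A (hFsub hAF) V hV (hAK.trans hKV)
      exact hKneV (Set.Subset.antisymm hKV (hAV ▸ hAK))
  · -- backward: discrete topology gives the basis of singletons
    intro hdisc
    obtain ⟨x0⟩ := hΩne
    refine ⟨Set.range (fun x : Ω => ({x} : Set Ω)), ⟨?_, ?_, ?_, ?_⟩, ?_⟩
    · rintro V ⟨x, rfl⟩
      exact ⟨Set.singleton_nonempty x, (Set.finite_singleton x).isCompact, isOpen_discrete _⟩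
    · rintro F hF V₀ ⟨x, rfl⟩ heq
      have hx : x ∈ ⋃ V ∈ F, V := by rw [← heq]; exact rfl
      obtain ⟨W, hWF, hxW⟩ := Set.mem_iUnion₂.mp hx
      obtain ⟨y, rfl⟩ := hF hWF
      have : y = x := (by simpa using hxW : x = y).symm
      rwa [this] at hWF
    · rintro V ⟨a, rfl⟩ W ⟨b, rfl⟩
      by_cases hab : a = b
      · right; subst hab; simp
      · left; exact Set.singleton_inter_eq_empty.mpr (by simpa using hab)
    · intro 𝒰 hsub hintc hunic hdiffc U hUc hUo
      have h0 : ({x0} : Set Ω) ∈ 𝒰 := hsub ⟨x0, rfl⟩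
      have hE : (∅ : Set Ω) ∈ 𝒰 := by
        have := hdiffc _ h0 _ h0
        simpa using this
      have hfin : U.Finite := isCompact_iff_finite.mp hUc
      have key : ∀ s : Finset Ω, (↑s : Set Ω) ∈ 𝒰 := by
        intro s
        induction s using Finset.induction with
        | empty => simpa using hE
        | insert a s ha ih =>
          have : ((insert a s : Finset Ω) : Set Ω) = {a} ∪ ↑s := by
            rw [Finset.coe_insert]; exact Set.insert_eq a (↑s)
          rw [this]
          exact hunic _ (hsub ⟨a, rfl⟩) _ ih
      have := key hfin.toFinset
      rwa [Set.Finite.coe_toFinset] at this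
    · rintro g V ⟨x, rfl⟩
      exact ⟨g • x, by rw [Set.smul_set_singleton]⟩
end

section
/- Let G be a locally compact Hausdorff topological group with a left Haar measure, acting properly and continuously on a locally compact Hausdorff space X such that the orbit space G\X is compact. Then there exists a continuous function c : X → [0,∞) with compact support such that for every x ∈ X, ∫_G c(s⁻¹·x)² ds = 1 (the integral taken with respect to the left Haar measure on G). -/
open MeasureTheory Set

theorem aux_fund {G X : Type*} [Group G] [TopologicalSpace G] [TopologicalSpace X] [LocallyCompactSpace X]
    [MulAction G X] [ContinuousSMul G X]
    (hcq : CompactSpace (Quotient (MulAction.orbitRel G X))) :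
    ∃ K : Set X, IsCompact K ∧ ∀ x : X, ∃ s : G, s • x ∈ K := by
  classical
  letI : Setoid X := MulAction.orbitRel G X
  have hV : ∀ x : X, ∃ V : Set X, IsCompact V ∧ V ∈ nhds x := fun x => exists_compact_mem_nhds x
  choose V hVc hVn using hV
  let π : X → Quotient (MulAction.orbitRel G X) := Quotient.mk'
  have hcover : univ ⊆ ⋃ x : X, π '' interior (V x) := by
    rintro q -
    obtain ⟨x, rfl⟩ := Quotient.exists_rep q
    exact mem_iUnion.2 ⟨x, ⟨x, mem_interior_iff_mem_nhds.2 (hVn x), rfl⟩⟩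
  obtain ⟨t, ht⟩ := isCompact_univ.elim_finite_subcover (fun x => π '' interior (V x))
    (fun x => isOpenMap_quotient_mk'_mul _ isOpen_interior) hcover
  refine ⟨⋃ x ∈ t, V x, t.isCompact_biUnion (fun x _ => hVc x), fun y => ?_⟩
  have := ht (mem_univ (π y))
  simp only [mem_iUnion] at this
  obtain ⟨x, hx, z, hz, hzy⟩ := this
  have hrel : z ∈ MulAction.orbit G y := Quotient.exact' hzy
  obtain ⟨g, rfl⟩ := hrel
  exact ⟨g, mem_iUnion₂.2 ⟨x, hx, interior_subset hz⟩⟩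


/-- If a locally compact Hausdorff group `G` with left Haar measure acts
properly on a locally compact Hausdorff space `X` with compact orbit space, then there
exists a continuous, compactly supported cut-off function `c : X → [0,∞)` with
`∫_G c(s⁻¹ • x)² ds = 1` for every `x ∈ X`. -/
theorem stmt10 {G X : Type*} [Group G] [TopologicalSpace G] [IsTopologicalGroup G]
    [LocallyCompactSpace G] [T2Space G] [MeasurableSpace G] [BorelSpace G]
    [TopologicalSpace X] [LocallyCompactSpace X] [T2Space X]
    [MulAction G X] [ContinuousSMul G X]
    (hproper : ∀ K : Set (X × X), IsCompact K →
      IsCompact ((fun p : G × X => (p.1 • p.2, p.2)) ⁻¹' K))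
    (hcq : CompactSpace (Quotient (MulAction.orbitRel G X)))
    (μ : Measure G) [μ.IsHaarMeasure] :
    ∃ c : X → ℝ, Continuous c ∧ HasCompactSupport c ∧ (∀ x, 0 ≤ c x) ∧
      ∀ x : X, ∫ s : G, (c (s⁻¹ • x)) ^ 2 ∂μ = 1 := by
  obtain ⟨K, hK, hKfund⟩ := aux_fund (G := G) hcq
  obtain ⟨K', hK', hKK'⟩ := exists_compact_superset hK
  obtain ⟨f, hf1, hf0, hfc, hf01⟩ := exists_continuous_one_zero_of_isCompact hK
    isOpen_interior.isClosed_compl (disjoint_compl_right_iff_subset.mpr hKK')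
  set φ : G × X → X × X := fun p => (p.1 • p.2, p.2) with hφ
  -- uniform support control
  have hW : ∀ N : Set X, IsCompact N → ∃ W : Set G, IsCompact W ∧
      ∀ x ∈ N, ∀ s : G, s ∉ W → f (s⁻¹ • x) = 0 := by
    intro N hN
    refine ⟨(Prod.fst '' (φ ⁻¹' (tsupport f ×ˢ N)))⁻¹,
      ((hproper _ (hfc.prod hN)).image continuous_fst).inv, fun x hx s hs => ?_⟩
    by_contra h
    apply hs
    have hts : s⁻¹ • x ∈ tsupport f := subset_tsupport f (by simpa [Function.mem_support] using h)
    exact Set.mem_inv.2 ⟨(s⁻¹, x), ⟨hts, hx⟩, rfl⟩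
  have gcont : ∀ x : X, Continuous fun s : G => f (s⁻¹ • x) ^ 2 :=
    fun x => ((map_continuous f).comp (continuous_inv.smul continuous_const)).pow 2
  have gsupp : ∀ x : X, HasCompactSupport fun s : G => f (s⁻¹ • x) ^ 2 := by
    intro x
    obtain ⟨W, hWc, hWs⟩ := hW {x} isCompact_singleton
    exact HasCompactSupport.intro hWc fun s hs => by
      rw [hWs x rfl s hs]; ring
  have gint : ∀ x : X, Integrable (fun s : G => f (s⁻¹ • x) ^ 2) μ :=
    fun x => (gcont x).integrable_of_hasCompactSupport (gsupp x)
  set F : X → ℝ := fun x => ∫ s : G, f (s⁻¹ • x) ^ 2 ∂μ with hF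
  have Finv : ∀ (t : G) (x : X), F (t • x) = F x := by
    intro t x
    have h := integral_mul_left_eq_self (μ := μ) (fun u => f (u⁻¹ • t • x) ^ 2) t
    simp only [mul_inv_rev, mul_smul, inv_smul_smul] at h
    exact h.symm
  have Fpos : ∀ x : X, 0 < F x := by
    intro x
    obtain ⟨s₀, hs₀⟩ := hKfund x
    refine (integral_pos_iff_support_of_nonneg (fun s => sq_nonneg _) (gint x)).2 ?_
    have hopen : IsOpen (Function.support fun s : G => f (s⁻¹ • x) ^ 2) := by
      rw [Function.support]
      have : {s : G | (f (s⁻¹ • x) ^ 2) ≠ 0} = (fun s : G => f (s⁻¹ • x) ^ 2) ⁻¹' ({0}ᶜ) := rfl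
      rw [this]
      exact (isClosed_singleton.isOpen_compl).preimage (gcont x)
    refine hopen.measure_pos μ ⟨s₀⁻¹, ?_⟩
    simp only [Function.mem_support, inv_inv]
    rw [hf1 hs₀]
    norm_num
  have Fcont : Continuous F := by
    rw [continuous_iff_continuousAt]
    intro x₀
    obtain ⟨N, hNc, hNn⟩ := exists_compact_mem_nhds x₀
    obtain ⟨W, hWc, hWs⟩ := hW N hNc
    rw [ContinuousAt, Metric.tendsto_nhds]
    intro ε hε
    set M : ℝ := (μ W).toReal with hM
    have hM0 : 0 ≤ M := ENNReal.toReal_nonneg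
    set δ : ℝ := ε / (M + 1) with hδ
    have hδ0 : 0 < δ := div_pos hε (by linarith)
    have hu : Continuous fun z : X × G => |f (z.2⁻¹ • z.1) ^ 2 - f (z.2⁻¹ • x₀) ^ 2| := by
      apply Continuous.abs
      apply Continuous.sub
      · exact ((map_continuous f).comp ((continuous_snd.inv).smul continuous_fst)).pow 2
      · exact ((map_continuous f).comp ((continuous_snd.inv).smul continuous_const)).pow 2
    have hev : ∀ᶠ x in nhds x₀, ∀ s ∈ W, |f (s⁻¹ • x) ^ 2 - f (s⁻¹ • x₀) ^ 2| < δ := by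
      apply hWc.eventually_forall_of_forall_eventually
      intro s hs
      have h1 : ContinuousAt (fun z : X × G => |f (z.2⁻¹ • z.1) ^ 2 - f (z.2⁻¹ • x₀) ^ 2|)
          (x₀, s) := hu.continuousAt
      have h2 : ∀ᶠ z : X × G in nhds (x₀, s),
          |f (z.2⁻¹ • z.1) ^ 2 - f (z.2⁻¹ • x₀) ^ 2| < δ :=
        h1.eventually_lt continuousAt_const (by simp [hδ0])
      exact h2
    have hx₀N : x₀ ∈ N := mem_of_mem_nhds hNn
    filter_upwards [hNn, hev] with x hxN hxe
    rw [Real.dist_eq, hF]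
    have hsub : (∫ s : G, f (s⁻¹ • x) ^ 2 ∂μ) - (∫ s : G, f (s⁻¹ • x₀) ^ 2 ∂μ)
        = ∫ s : G, (f (s⁻¹ • x) ^ 2 - f (s⁻¹ • x₀) ^ 2) ∂μ :=
      (integral_sub (gint x) (gint x₀)).symm
    rw [hsub]
    have hbound : ‖∫ s : G, (f (s⁻¹ • x) ^ 2 - f (s⁻¹ • x₀) ^ 2) ∂μ‖
        ≤ ∫ s : G, W.indicator (fun _ => δ) s ∂μ := by
      apply norm_integral_le_of_norm_le
      · rw [integrable_indicator_iff hWc.isClosed.measurableSet]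
        exact integrableOn_const hWc.measure_lt_top.ne
      · refine Filter.Eventually.of_forall fun s => ?_
        by_cases hs : s ∈ W
        · rw [Set.indicator_of_mem hs, Real.norm_eq_abs]
          exact (hxe s hs).le
        · rw [Set.indicator_of_notMem hs, hWs x hxN s hs, hWs x₀ hx₀N s hs]
          simp
    rw [Real.norm_eq_abs] at hbound
    have hind : ∫ s : G, W.indicator (fun _ => δ) s ∂μ = M * δ := by
      rw [integral_indicator_const (δ : ℝ) hWc.isClosed.measurableSet]
      simp [hM, mul_comm, measureReal_def]
    calc |∫ s : G, (f (s⁻¹ • x) ^ 2 - f (s⁻¹ • x₀) ^ 2) ∂μ| ≤ M * δ := by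
          rw [← hind]; exact hbound
      _ < (M + 1) * δ := by nlinarith
      _ = ε := by
          rw [hδ]; field_simp
  refine ⟨fun x => f x / Real.sqrt (F x), ?_, ?_, ?_, ?_⟩
  · exact (map_continuous f).div (Fcont.sqrt)
      fun x => (Real.sqrt_pos.2 (Fpos x)).ne'
  · refine hfc.mono fun x hx => ?_
    simp only [Function.mem_support] at hx ⊢
    intro h; exact hx (by rw [h, zero_div])
  · intro x
    exact div_nonneg (hf01 x).1 (Real.sqrt_nonneg _)
  · intro x
    have key : ∀ s : G, (f (s⁻¹ • x) / Real.sqrt (F (s⁻¹ • x))) ^ 2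
        = f (s⁻¹ • x) ^ 2 / F x := by
      intro s
      rw [div_pow, Real.sq_sqrt (Fpos (s⁻¹ • x)).le, Finv s⁻¹ x]
    simp only [key]
    rw [integral_div]
    exact div_self (Fpos x).ne'
end

section
/- Let G be a locally compact Hausdorff topological group with a left Haar measure, acting properly and continuously on a locally compact Hausdorff space X, let c : X → [0,∞) be a continuous compactly supported function satisfying ∫_G c(t⁻¹·x)² dt = 1 for all x ∈ X, and let Δ : G → ℝ_{>0} be a continuous group homomorphism into the multiplicative group of positive reals (for example, the modular function of G). Define p : G × X → ℝ by p(s,x) = Δ(s)^{-1/2} c(x) c(s⁻¹·x). Then for all s ∈ G and x ∈ X, the convolution identity ∫_G p(t,x) · p(t⁻¹s, t⁻¹·x) dt = p(s,x) holds (all integrals taken with respect to the left Haar measure on G); in other words, p is an idempotent under this convolution. -/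
open MeasureTheory

/-- Let `G` be a locally compact Hausdorff group with left Haar measure `μ`
acting properly on a locally compact Hausdorff space `X`, let `c` be a cut-off function
(`∫_G c(t⁻¹ • x)² dt = 1`), and let `Δ : G → ℝ_{>0}` be a continuous homomorphism. Then
`p(s,x) = Δ(s)^{-1/2} c(x) c(s⁻¹ • x)` satisfies the convolution idempotency identity
`∫_G p(t,x) p(t⁻¹s, t⁻¹ • x) dt = p(s,x)` for all `s ∈ G`, `x ∈ X`. -/
theorem stmt11 {G X : Type*} [Group G] [TopologicalSpace G] [IsTopologicalGroup G]
    [LocallyCompactSpace G] [T2Space G] [MeasurableSpace G] [BorelSpace G]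
    [TopologicalSpace X] [LocallyCompactSpace X] [T2Space X]
    [MulAction G X] [ContinuousSMul G X]
    (hproper : ∀ K : Set (X × X), IsCompact K →
      IsCompact ((fun p : G × X => (p.1 • p.2, p.2)) ⁻¹' K))
    (μ : Measure G) [μ.IsHaarMeasure]
    (c : X → ℝ) (hc : Continuous c) (hcs : HasCompactSupport c) (hc0 : ∀ x, 0 ≤ c x)
    (hint : ∀ x : X, ∫ t : G, (c (t⁻¹ • x)) ^ 2 ∂μ = 1)
    (Δ : G → ℝ) (hΔpos : ∀ g, 0 < Δ g) (hΔcont : Continuous Δ)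
    (hΔmul : ∀ g h : G, Δ (g * h) = Δ g * Δ h)
    (p : G × X → ℝ)
    (hp : ∀ (s : G) (x : X), p (s, x) = Δ s ^ (-(1 / 2) : ℝ) * (c x * c (s⁻¹ • x))) :
    ∀ (s : G) (x : X), ∫ t : G, p (t, x) * p (t⁻¹ * s, t⁻¹ • x) ∂μ = p (s, x) := by
  intro s x
  have key : ∀ t : G, p (t, x) * p (t⁻¹ * s, t⁻¹ • x) =
      (Δ s ^ (-(1 / 2) : ℝ) * (c x * c (s⁻¹ • x))) * c (t⁻¹ • x) ^ 2 := by
    intro t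
    rw [hp, hp]
    have h1 : (t⁻¹ * s)⁻¹ • (t⁻¹ • x) = s⁻¹ • x := by
      rw [smul_smul]; congr 1; group
    rw [h1]
    have h2 : Δ t ^ (-(1 / 2) : ℝ) * Δ (t⁻¹ * s) ^ (-(1 / 2) : ℝ)
        = Δ s ^ (-(1 / 2) : ℝ) := by
      rw [← Real.mul_rpow (hΔpos t).le (hΔpos _).le, ← hΔmul]
      congr 2
      group
    calc Δ t ^ (-(1 / 2) : ℝ) * (c x * c (t⁻¹ • x)) *
          (Δ (t⁻¹ * s) ^ (-(1 / 2) : ℝ) * (c (t⁻¹ • x) * c (s⁻¹ • x)))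
        = (Δ t ^ (-(1 / 2) : ℝ) * Δ (t⁻¹ * s) ^ (-(1 / 2) : ℝ)) *
            (c x * c (s⁻¹ • x)) * c (t⁻¹ • x) ^ 2 := by ring
      _ = Δ s ^ (-(1 / 2) : ℝ) * (c x * c (s⁻¹ • x)) * c (t⁻¹ • x) ^ 2 := by rw [h2]
  simp_rw [key]
  rw [integral_const_mul, hint, mul_one, hp]
end

section
/- Let ℓ²(ℤ,ℂ) denote the Hilbert space of square-summable functions ℤ → ℂ, and let sgn : ℤ → ℤ be given by sgn(n) = 1 for n > 0, sgn(0) = 0, sgn(n) = −1 for n < 0. For ξ : ℤ → ℂ define Fξ : ℤ → ℂ by (Fξ)(m) = (1 − sgn(m−1))·ξ(m−1) − (1 + sgn(m))·ξ(m). Then: (a) if ξ ∈ ℓ²(ℤ,ℂ) then Fξ ∈ ℓ²(ℤ,ℂ); (b) F maps ℓ²(ℤ,ℂ) onto ℓ²(ℤ,ℂ); and (c) the kernel of F in ℓ²(ℤ,ℂ) is the one-dimensional subspace spanned by the vector v with v(−1) = 1, v(0) = 2, v(1) = 1, and v(n) = 0 for all other n. (Thus F is a surjective Fredholm operator with one-dimensional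 kernel, hence of Fredholm index 1.) -/
/-- The operator `F̂₅` on functions `ℤ → ℂ`:
`(Fξ)(m) = (1 − sgn(m−1))·ξ(m−1) − (1 + sgn(m))·ξ(m)`. -/
noncomputable def hatF (ξ : ℤ → ℂ) : ℤ → ℂ := fun m =>
  ((1 - Int.sign (m - 1) : ℤ) : ℂ) * ξ (m - 1) - ((1 + Int.sign m : ℤ) : ℂ) * ξ m

/-- The vector `v = e₁ + 2e₀ + e₋₁` spanning the kernel. -/
noncomputable def kerVec : ℤ → ℂ := fun n =>
  if n = -1 then 1 else if n = 0 then 2 else if n = 1 then 1 else 0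

lemma kerVec_neg_one : kerVec (-1) = 1 := by simp [kerVec]
lemma kerVec_zero : kerVec 0 = 2 := by simp [kerVec]
lemma kerVec_one : kerVec 1 = 1 := by simp [kerVec]
lemma kerVec_other {n : ℤ} (h1 : n ≠ -1) (h2 : n ≠ 0) (h3 : n ≠ 1) : kerVec n = 0 := by
  simp [kerVec, h1, h2, h3]

lemma hatF_neg (ξ : ℤ → ℂ) {m : ℤ} (h : m < 0) : hatF ξ m = 2 * ξ (m - 1) := by
  have h1 : Int.sign (m - 1) = -1 := Int.sign_eq_neg_one_iff_neg.mpr (by omega)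
  have h2 : Int.sign m = -1 := Int.sign_eq_neg_one_iff_neg.mpr h
  rw [hatF, h1, h2]
  push_cast; ring

lemma hatF_zero (ξ : ℤ → ℂ) : hatF ξ 0 = 2 * ξ (-1) - ξ 0 := by
  have h1 : Int.sign ((0:ℤ) - 1) = -1 := Int.sign_eq_neg_one_iff_neg.mpr (by omega)
  rw [hatF, h1]
  norm_num

lemma hatF_one (ξ : ℤ → ℂ) : hatF ξ 1 = ξ 0 - 2 * ξ 1 := by
  have h2 : Int.sign 1 = 1 := Int.sign_eq_one_iff_pos.mpr (by omega)
  rw [hatF, h2]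
  norm_num

lemma hatF_ge2 (ξ : ℤ → ℂ) {m : ℤ} (h : 2 ≤ m) : hatF ξ m = -2 * ξ m := by
  have h1 : Int.sign (m - 1) = 1 := Int.sign_eq_one_iff_pos.mpr (by omega)
  have h2 : Int.sign m = 1 := Int.sign_eq_one_iff_pos.mpr (by omega)
  rw [hatF, h1, h2]
  push_cast; ring

lemma mem2_of_le {f g : ℤ → ℂ} (hg : Memℓp g 2) (h : ∀ n, ‖f n‖ ≤ ‖g n‖) :
    Memℓp f 2 := by
  apply memℓp_gen
  have hs := hg.summable (p := 2) (by norm_num)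
  refine hs.of_nonneg_of_le (fun n => ?_) (fun n => ?_)
  · positivity
  · exact Real.rpow_le_rpow (norm_nonneg _) (h n) (by norm_num)

lemma mem2_shift {f : ℤ → ℂ} (hf : Memℓp f 2) (k : ℤ) :
    Memℓp (fun n => f (n + k)) 2 := by
  apply memℓp_gen
  have hs : Summable ((fun i => ‖f i‖ ^ (2 : ENNReal).toReal) ∘ (Equiv.addRight k)) :=
    ((Equiv.addRight k).summable_iff).mpr (hf.summable (p := 2) (by norm_num))
  simpa [Function.comp_def] using hs

lemma sign_cases (m : ℤ) : Int.sign m = -1 ∨ Int.sign m = 0 ∨ Int.sign m = 1 := by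
  rcases lt_trichotomy m 0 with h | h | h
  · exact Or.inl (Int.sign_eq_neg_one_iff_neg.mpr h)
  · subst h; simp
  · exact Or.inr (Or.inr (Int.sign_eq_one_iff_pos.mpr h))

lemma hatF_mem (ξ : ℤ → ℂ) (hξ : Memℓp ξ 2) : Memℓp (hatF ξ) 2 := by
  have hA : Memℓp (fun m => ((1 - Int.sign (m - 1) : ℤ) : ℂ) * ξ (m - 1)) 2 := by
    refine mem2_of_le ((mem2_shift hξ (-1)).const_smul (2:ℂ)) (fun n => ?_)
    have he : (n + -1 : ℤ) = n - 1 := by ring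
    rw [Pi.smul_apply, smul_eq_mul, norm_mul, norm_mul, he]
    have hb : ‖((1 - Int.sign (n - 1) : ℤ) : ℂ)‖ ≤ ‖(2:ℂ)‖ := by
      rcases sign_cases (n - 1) with h | h | h <;> rw [h] <;> norm_num
    exact mul_le_mul_of_nonneg_right hb (norm_nonneg _)
  have hB : Memℓp (fun m => -(((1 + Int.sign m : ℤ) : ℂ) * ξ m)) 2 := by
    refine mem2_of_le (hξ.const_smul (2:ℂ)) (fun n => ?_)
    rw [Pi.smul_apply, smul_eq_mul, norm_neg, norm_mul, norm_mul]
    have hb : ‖((1 + Int.sign n : ℤ) : ℂ)‖ ≤ ‖(2:ℂ)‖ := by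
      rcases sign_cases n with h | h | h <;> rw [h] <;> norm_num
    exact mul_le_mul_of_nonneg_right hb (norm_nonneg _)
  have hsum := hA.add hB
  have heq : hatF ξ = (fun m => ((1 - Int.sign (m - 1) : ℤ) : ℂ) * ξ (m - 1)) +
      (fun m => -(((1 + Int.sign m : ℤ) : ℂ) * ξ m)) := by
    funext m
    simp only [hatF, Pi.add_apply]
    ring
  rw [heq]; exact hsum

/-- The operator `F` with `(Fξ)(m) = (1 − sgn(m−1))·ξ(m−1) − (1 + sgn(m))·ξ(m)`
(a) maps `ℓ²(ℤ,ℂ)` to `ℓ²(ℤ,ℂ)`; (b) maps `ℓ²(ℤ,ℂ)` onto `ℓ²(ℤ,ℂ)`; and (c) its kernel in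
`ℓ²(ℤ,ℂ)` is the one-dimensional subspace spanned by `v` with `v(−1) = 1`, `v(0) = 2`,
`v(1) = 1` and `v(n) = 0` otherwise. -/
theorem stmt12 :
    (∀ ξ : lp (fun _ : ℤ => ℂ) 2, Memℓp (hatF ξ) 2) ∧
    (∀ η : lp (fun _ : ℤ => ℂ) 2, ∃ ξ : lp (fun _ : ℤ => ℂ) 2,
      ∀ m : ℤ, hatF ξ m = η m) ∧
    (∀ ξ : lp (fun _ : ℤ => ℂ) 2,
      (∀ m : ℤ, hatF ξ m = 0) ↔ ∃ z : ℂ, ∀ n : ℤ, ξ n = z * kerVec n) := by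
  refine ⟨fun ξ => hatF_mem ξ (lp.memℓp ξ), ?_, ?_⟩
  · -- surjectivity
    intro η
    set ξf : ℤ → ℂ := fun n =>
      if n ≤ -1 then η (n + 1) / 2 else if n = 0 then 0 else -η n / 2 with hξf
    have hmem : Memℓp ξf 2 := by
      have hA : Memℓp (fun n => if n ≤ -1 then η (n + 1) / 2 else 0) 2 := by
        refine mem2_of_le (mem2_shift (lp.memℓp η) 1) (fun n => ?_)
        by_cases h : n ≤ -1
        · simp only [if_pos h, norm_div]
          have h2 : ‖(2:ℂ)‖ = 2 := by norm_num
          rw [h2]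
          have := norm_nonneg (η (n + 1))
          linarith
        · simp [h]
      have hB : Memℓp (fun n => if 1 ≤ n then -η n / 2 else 0) 2 := by
        refine mem2_of_le (lp.memℓp η) (fun n => ?_)
        by_cases h : 1 ≤ n
        · simp only [if_pos h, norm_div, norm_neg]
          have h2 : ‖(2:ℂ)‖ = 2 := by norm_num
          rw [h2]
          have := norm_nonneg (η n)
          linarith
        · simp [h]
      have hsum := hA.add hB
      have heq : ξf = (fun n => if n ≤ -1 then η (n + 1) / 2 else 0) +
          (fun n => if 1 ≤ n then -η n / 2 else 0) := by
        funext n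
        by_cases h1 : n ≤ -1
        · simp [ξf, h1, show ¬(1 ≤ n) by omega]
        · by_cases h2 : n = 0
          · simp [ξf, h2]
          · simp [ξf, h1, h2, show 1 ≤ n by omega]
      rw [heq]; exact hsum
    refine ⟨⟨ξf, hmem⟩, fun m => ?_⟩
    have hcoe : ∀ n, ((⟨ξf, hmem⟩ : lp (fun _ : ℤ => ℂ) 2) : ℤ → ℂ) n = ξf n :=
      fun n => rfl
    rcases lt_trichotomy m 0 with hm | hm | hm
    · rw [hatF_neg _ hm, hcoe]
      simp only [ξf, if_pos (show m - 1 ≤ -1 by omega)]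
      rw [show m - 1 + 1 = m by ring]; ring
    · subst hm
      rw [hatF_zero, hcoe, hcoe]
      simp only [ξf]
      norm_num
      ring
    · rcases eq_or_lt_of_le (show (1:ℤ) ≤ m by omega) with hm1 | hm2
      · subst hm1
        rw [hatF_one, hcoe, hcoe]
        simp only [ξf]
        norm_num
        ring
      · rw [hatF_ge2 _ (by omega), hcoe]
        simp only [ξf, if_neg (show ¬ m ≤ -1 by omega), if_neg (show m ≠ 0 by omega)]
        ring
  · -- kernel
    intro ξ
    constructor
    · intro h
      refine ⟨ξ (-1), fun n => ?_⟩
      have h0 : (ξ : ℤ → ℂ) 0 = 2 * ξ (-1) := by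
        have := h 0; rw [hatF_zero] at this
        linear_combination -this
      rcases lt_trichotomy n (-1) with hn | hn | hn
      · have hh := h (n + 1)
        rw [hatF_neg _ (by omega), show n + 1 - 1 = n by ring] at hh
        rw [kerVec_other (by omega) (by omega) (by omega)]
        linear_combination hh / 2
      · subst hn; rw [kerVec_neg_one]; ring
      · rcases lt_trichotomy n 0 with hn' | hn' | hn'
        · omega
        · subst hn'; rw [h0, kerVec_zero]; ring
        · rcases lt_trichotomy n 1 with hn'' | hn'' | hn''
          · omega
          · subst hn''
            have hh := h 1; rw [hatF_one] at hh
            rw [kerVec_one]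
            linear_combination -hh / 2 + h0 / 2
          · have hh := h n
            rw [hatF_ge2 _ (by omega)] at hh
            rw [kerVec_other (by omega) (by omega) (by omega)]
            linear_combination -hh / 2
    · rintro ⟨z, hz⟩ m
      rcases lt_trichotomy m 0 with hm | hm | hm
      · rw [hatF_neg _ hm, hz,
          kerVec_other (by omega) (by omega) (by omega)]
        ring
      · subst hm
        rw [hatF_zero, hz, hz, kerVec_zero, kerVec_neg_one]
        ring
      · rcases eq_or_lt_of_le (show (1:ℤ) ≤ m by omega) with hm1 | hm2
        · subst hm1
          rw [hatF_one, hz, hz, kerVec_zero, kerVec_one]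
          ring
        · rw [hatF_ge2 _ (by omega), hz,
            kerVec_other (by omega) (by omega) (by omega)]
          ring
end

section
/- Let ℓ²(ℤ,ℂ) denote the Hilbert space of square-summable functions ℤ → ℂ, and let sgn : ℤ → ℝ be given by sgn(n) = 1 for n > 0, sgn(0) = 0, sgn(n) = −1 for n < 0. Define a_n = n/√(1+n²) − sgn(n) for n ∈ ℤ. Then there is a bounded (continuous) linear operator T on ℓ²(ℤ,ℂ) given by (Tξ)(n) = a_n · ξ(n), and T is a compact operator. -/
/-- The multiplier sequence `a n = n/√(1+n²) − sgn(n)`. -/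
noncomputable def mulSeq (n : ℤ) : ℝ :=
  (n : ℝ) / Real.sqrt (1 + (n : ℝ) ^ 2) - (Int.sign n : ℝ)


open scoped ENNReal

local notation "H" => lp (fun _ : ℤ => ℂ) 2

lemma memℓp_mul (b : ℤ → ℝ) (C : ℝ) (hb : ∀ n, |b n| ≤ C) (ξ : H) :
    Memℓp (fun n => (b n : ℂ) * ξ n) 2 := by
  have hC : 0 ≤ C := (abs_nonneg _).trans (hb 0)
  have hp : 0 < (2:ℝ≥0∞).toReal := by norm_num
  apply memℓp_gen
  have hsum := ((lp.memℓp ξ).summable hp).mul_left (C ^ 2)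
  refine Summable.of_nonneg_of_le (fun n => ?_) (fun n => ?_) hsum
  · positivity
  · have h2 : ((2:ℝ≥0∞)).toReal = (2:ℝ) := by norm_num
    rw [h2, Real.rpow_two, Real.rpow_two, norm_mul, mul_pow]
    have hbc : ‖(b n : ℂ)‖ ≤ C := by simpa [Complex.norm_real] using hb n
    exact mul_le_mul_of_nonneg_right (pow_le_pow_left₀ (norm_nonneg _) hbc 2) (by positivity)

noncomputable def mulL (b : ℤ → ℝ) (C : ℝ) (hb : ∀ n, |b n| ≤ C) : H →ₗ[ℂ] H where
  toFun ξ := ⟨fun n => (b n : ℂ) * ξ n, memℓp_mul b C hb ξ⟩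
  map_add' ξ η := by
    apply lp.ext
    funext n
    simp only [lp.coeFn_add, Pi.add_apply]
    exact mul_add _ _ _
  map_smul' c ξ := by
    apply lp.ext
    funext n
    simp only [lp.coeFn_smul, Pi.smul_apply, RingHom.id_apply, smul_eq_mul]
    ring

lemma mulL_apply (b : ℤ → ℝ) (C : ℝ) (hb : ∀ n, |b n| ≤ C) (ξ : H) (n : ℤ) :
    (mulL b C hb ξ) n = (b n : ℂ) * ξ n := rfl

lemma mulL_norm_le (b : ℤ → ℝ) (C : ℝ) (hb : ∀ n, |b n| ≤ C) (ξ : H) :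
    ‖mulL b C hb ξ‖ ≤ C * ‖ξ‖ := by
  have hC : 0 ≤ C := (abs_nonneg _).trans (hb 0)
  have hp : 0 < (2:ℝ≥0∞).toReal := by norm_num
  have hkey : ‖mulL b C hb ξ‖ ^ (2:ℕ) ≤ (C * ‖ξ‖) ^ (2:ℕ) := by
    have h1 := lp.norm_rpow_eq_tsum hp (mulL b C hb ξ)
    have h2 := lp.norm_rpow_eq_tsum hp ξ
    have h2' : ((2:ℝ≥0∞)).toReal = (2:ℝ) := by norm_num
    rw [h2'] at h1 h2
    simp only [Real.rpow_two] at h1 h2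
    rw [h1, mul_pow, h2, ← tsum_mul_left]
    refine Summable.tsum_le_tsum (fun n => ?_) ?_ ?_
    · rw [mulL_apply, norm_mul, mul_pow]
      have hbc : ‖(b n : ℂ)‖ ≤ C := by simpa [Complex.norm_real] using hb n
      exact mul_le_mul_of_nonneg_right (pow_le_pow_left₀ (norm_nonneg _) hbc 2)
        (by positivity)
    · have := (lp.memℓp (mulL b C hb ξ)).summable hp
      simpa [Real.rpow_two] using this
    · have := ((lp.memℓp ξ).summable hp).mul_left (C ^ 2)
      simpa [Real.rpow_two] using this
  exact pow_le_pow_iff_left₀ (norm_nonneg _) (by positivity) (by norm_num) |>.mp hkey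

noncomputable def mulOp (b : ℤ → ℝ) (C : ℝ) (hb : ∀ n, |b n| ≤ C) : H →L[ℂ] H :=
  LinearMap.mkContinuous (mulL b C hb) C (mulL_norm_le b C hb)

lemma mulOp_apply (b : ℤ → ℝ) (C : ℝ) (hb : ∀ n, |b n| ≤ C) (ξ : H) (n : ℤ) :
    (mulOp b C hb ξ) n = (b n : ℂ) * ξ n := rfl

lemma mulOp_norm_le (b : ℤ → ℝ) (C : ℝ) (hb : ∀ n, |b n| ≤ C) :
    ‖mulOp b C hb‖ ≤ C :=
  LinearMap.mkContinuous_norm_le _ ((abs_nonneg _).trans (hb 0)) _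

lemma mulOp_finrank_compact (b : ℤ → ℝ) (C : ℝ) (hb : ∀ n, |b n| ≤ C)
    (s : Finset ℤ) (hsupp : ∀ n ∉ s, b n = 0) :
    IsCompactOperator (⇑(mulOp b C hb)) := by
  set T := mulOp b C hb with hT
  set V : Submodule ℂ H :=
    Submodule.span ℂ ((fun n : ℤ => lp.single 2 n (1:ℂ)) '' s) with hV
  haveI : FiniteDimensional ℂ V :=
    FiniteDimensional.span_of_finite ℂ (s.finite_toSet.image _)
  have hrange : ∀ ξ : H, T ξ ∈ V := by
    intro ξ
    have heq : T ξ = ∑ n ∈ s, ((b n : ℂ) * ξ n) • lp.single 2 n (1:ℂ) := by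
      apply lp.ext
      funext m
      rw [lp.coeFn_sum]
      simp only [Finset.sum_apply, lp.coeFn_smul, Pi.smul_apply, lp.single_apply,
        smul_dite, smul_zero, smul_eq_mul, eq_rec_constant, mul_one, mul_dite, mul_zero, Finset.sum_dite_eq]
      simp only [Pi.single_apply, mul_ite, mul_one, mul_zero, Finset.sum_ite_eq]
      rw [show (T ξ) m = (b m : ℂ) * ξ m from mulOp_apply b C hb ξ m]
      by_cases hm : m ∈ s
      · rw [if_pos hm]
      · rw [if_neg hm, hsupp m hm]
        simp
    rw [heq]
    exact Submodule.sum_mem _ fun n hn =>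
      Submodule.smul_mem _ _ (Submodule.subset_span ⟨n, hn, rfl⟩)
  haveI : CompleteSpace V := FiniteDimensional.complete ℂ V
  haveI : ProperSpace V := FiniteDimensional.proper ℂ V
  refine ⟨Subtype.val '' Metric.closedBall (0 : V) ‖T‖, ?_, ?_⟩
  · exact (isCompact_closedBall _ _).image continuous_subtype_val
  · refine Filter.mem_of_superset (Metric.ball_mem_nhds 0 one_pos) ?_
    intro ξ hξ
    refine ⟨⟨T ξ, hrange ξ⟩, ?_, rfl⟩
    rw [Metric.mem_closedBall, dist_zero_right]
    show ‖T ξ‖ ≤ ‖T‖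
    calc ‖T ξ‖ ≤ ‖T‖ * ‖ξ‖ := T.le_opNorm ξ
      _ ≤ ‖T‖ * 1 := by
          have := (Metric.mem_ball.mp hξ)
          rw [dist_zero_right] at this
          exact mul_le_mul_of_nonneg_left this.le (norm_nonneg _)
      _ = ‖T‖ := mul_one _

lemma aux (x : ℝ) (hx : 0 < x) : |x / Real.sqrt (1 + x ^ 2) - 1| ≤ 1 / x ^ 2 := by
  have h1 : (0:ℝ) < 1 + x ^ 2 := by positivity
  set s := Real.sqrt (1 + x ^ 2) with hs
  have hs0 : 0 < s := Real.sqrt_pos.mpr h1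
  have hs2 : s ^ 2 = 1 + x ^ 2 := Real.sq_sqrt h1.le
  have hxs : x ≤ s := by nlinarith
  have hdiv : x / s ≤ 1 := (div_le_one hs0).mpr hxs
  rw [abs_sub_comm, abs_of_nonneg (by linarith)]
  have he : 1 - x / s = (s - x) / s := by field_simp
  rw [he, div_le_div_iff₀ hs0 (by positivity)]
  have key : (s - x) * (s + x) = 1 := by nlinarith
  nlinarith [mul_pos hs0 hx]


lemma mulSeq_zero : mulSeq 0 = 0 := by simp [mulSeq]

lemma abs_mulSeq_le (n : ℤ) (hn : n ≠ 0) : |mulSeq n| ≤ 1 / (n : ℝ) ^ 2 := by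
  rcases lt_or_gt_of_ne hn with h | h
  · have hx : (0:ℝ) < -(n:ℝ) := by
      have : (n:ℝ) < 0 := by exact_mod_cast h
      linarith
    have h2 := aux (-(n:ℝ)) hx
    rw [neg_sq] at h2
    have hsgn : (Int.sign n : ℝ) = -1 := by rw [Int.sign_eq_neg_one_of_neg h]; norm_num
    have : -(n:ℝ) / Real.sqrt (1 + (n:ℝ) ^ 2) - 1 = -(mulSeq n) := by
      simp [mulSeq, hsgn, neg_div]; ring
    rw [this, abs_neg] at h2
    simpa [neg_sq] using h2
  · have hx : (0:ℝ) < (n:ℝ) := by exact_mod_cast h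
    have h2 := aux (n:ℝ) hx
    have hsgn : (Int.sign n : ℝ) = 1 := by rw [Int.sign_eq_one_of_pos h]; norm_num
    simpa [mulSeq, hsgn] using h2

lemma abs_mulSeq_le_one (n : ℤ) : |mulSeq n| ≤ 1 := by
  rcases eq_or_ne n 0 with rfl | hn
  · simp [mulSeq_zero]
  · refine (abs_mulSeq_le n hn).trans ?_
    have h1 : (1:ℝ) ≤ (n:ℝ) ^ 2 := by
      have : (1:ℤ) ≤ n ^ 2 := by
        rcases hn.lt_or_gt with h | h <;> nlinarith
      exact_mod_cast this
    rw [div_le_one (by linarith)]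
    linarith

noncomputable def bN (N : ℕ) (n : ℤ) : ℝ :=
  if n ∈ Finset.Icc (-(N:ℤ)) N then mulSeq n else 0

lemma bN_abs_le (N : ℕ) (n : ℤ) : |bN N n| ≤ 1 := by
  unfold bN; split
  · exact abs_mulSeq_le_one n
  · simp

lemma diff_abs_le (N : ℕ) (n : ℤ) :
    |mulSeq n - bN N n| ≤ 1 / ((N:ℝ) + 1) ^ 2 := by
  unfold bN
  split
  · simp; positivity
  · rename_i hmem
    have hn : n ≠ 0 := by
      rintro rfl
      exact hmem (by simp)
    rw [sub_zero]
    refine (abs_mulSeq_le n hn).trans ?_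
    have hN1 : ((N:ℝ) + 1) ^ 2 ≤ (n:ℝ) ^ 2 := by
      rw [Finset.mem_Icc, not_and_or, not_le, not_le] at hmem
      have : ((N:ℤ) + 1) ^ 2 ≤ n ^ 2 := by
        rcases hmem with h | h <;> nlinarith
      exact_mod_cast this
    have h0 : (0:ℝ) < ((N:ℝ) + 1) ^ 2 := by positivity
    exact one_div_le_one_div_of_le h0 hN1

noncomputable def TT : lp (fun _ : ℤ => ℂ) 2 →L[ℂ] lp (fun _ : ℤ => ℂ) 2 :=
  mulOp mulSeq 1 abs_mulSeq_le_one

noncomputable def TN (N : ℕ) : lp (fun _ : ℤ => ℂ) 2 →L[ℂ] lp (fun _ : ℤ => ℂ) 2 :=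
  mulOp (bN N) 1 (bN_abs_le N)

noncomputable def DN (N : ℕ) : lp (fun _ : ℤ => ℂ) 2 →L[ℂ] lp (fun _ : ℤ => ℂ) 2 :=
  mulOp (fun n => mulSeq n - bN N n) (1 / ((N:ℝ) + 1) ^ 2) (diff_abs_le N)

lemma T_eq (N : ℕ) : TT = TN N + DN N := by
  apply ContinuousLinearMap.ext
  intro ξ
  apply lp.ext
  funext n
  rw [show (TT ξ) n = (mulSeq n : ℂ) * ξ n from rfl]
  rw [show ((TN N + DN N) ξ) n = ((TN N) ξ + (DN N) ξ) n from rfl]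
  rw [lp.coeFn_add, Pi.add_apply,
    show ((TN N) ξ) n = (bN N n : ℂ) * ξ n from rfl,
    show ((DN N) ξ) n = ((mulSeq n - bN N n : ℝ) : ℂ) * ξ n from rfl]
  push_cast
  ring

lemma TN_compact (N : ℕ) : IsCompactOperator (⇑(TN N)) := by
  apply mulOp_finrank_compact _ _ _ (Finset.Icc (-(N:ℤ)) N)
  intro n hn
  simp [bN, hn]

lemma tendsto_TN : Filter.Tendsto TN Filter.atTop (nhds TT) := by
  rw [tendsto_iff_norm_sub_tendsto_zero]
  have hb : ∀ N : ℕ, ‖TN N - TT‖ ≤ 1 / ((N:ℝ) + 1) := by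
    intro N
    have h1 : TN N - TT = -(DN N) := by rw [T_eq N]; abel
    rw [h1, norm_neg]
    refine (mulOp_norm_le _ _ _).trans ?_
    have h2 : (1:ℝ) ≤ (N:ℝ) + 1 := by have := Nat.cast_nonneg (α := ℝ) N; linarith
    rw [div_le_div_iff₀ (by positivity) (by positivity)]
    nlinarith
  refine squeeze_zero (fun N => norm_nonneg _) hb ?_
  exact tendsto_one_div_add_atTop_nhds_zero_nat


/-- There exists a bounded linear operator `T` on `ℓ²(ℤ,ℂ)` given by
pointwise multiplication with the sequence `a n = n/√(1+n²) − sgn(n)`, and `T` is a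
compact operator. -/
theorem stmt13 :
    ∃ T : lp (fun _ : ℤ => ℂ) 2 →L[ℂ] lp (fun _ : ℤ => ℂ) 2,
      (∀ (ξ : lp (fun _ : ℤ => ℂ) 2) (n : ℤ), (T ξ) n = (mulSeq n : ℂ) * ξ n) ∧
      IsCompactOperator (⇑T) := by
  refine ⟨TT, fun ξ n => rfl, ?_⟩
  exact isCompactOperator_of_tendsto tendsto_TN
    (Filter.Eventually.of_forall TN_compact)
end

section
/- Let n ≥ 0 and let Q be the standard quadratic form Q(z) = ∑_{i=1}^{2n+1} z_i² on ℂ^{2n+1}. Then the Clifford algebra Cl(Q) over ℂ is isomorphic as a ℂ-algebra to the direct sum M_{2^n}(ℂ) ⊕ M_{2^n}(ℂ) of two copies of the algebra of 2^n × 2^n complex matrices. -/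
noncomputable section
open CliffordAlgebra Matrix

/-- The standard sum-of-squares quadratic form on `ℂ^m`. -/
def Qf (m : ℕ) : QuadraticForm ℂ (Fin m → ℂ) :=
  QuadraticMap.weightedSumSquares ℂ (fun _ : Fin m => (1:ℂ))

lemma Qf_apply (m : ℕ) (z : Fin m → ℂ) : Qf m z = ∑ i, z i ^ 2 := by
  simp [Qf, QuadraticMap.weightedSumSquares_apply, sq]

lemma Qf_polar (m : ℕ) (x y : Fin m → ℂ) :
    QuadraticMap.polar (Qf m) x y = ∑ i, 2 * x i * y i := by
  simp only [QuadraticMap.polar, Qf_apply, Pi.add_apply]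
  rw [← Finset.sum_sub_distrib, ← Finset.sum_sub_distrib]
  congr 1; funext i; ring

lemma iota_anticomm {m : ℕ} {x y : Fin m → ℂ} (h : ∀ i, x i * y i = 0) :
    ι (Qf m) x * ι (Qf m) y = - (ι (Qf m) y * ι (Qf m) x) := by
  have := CliffordAlgebra.ι_mul_ι_add_swap (Q := Qf m) x y
  rw [Qf_polar] at this
  simp only [mul_assoc, h, mul_zero, Finset.sum_const_zero, map_zero] at this
  exact eq_neg_of_add_eq_zero_left this


/-! ### The one-dimensional case: `Cl(Qf 1) ≃ ℂ × ℂ` -/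

def f1 : (Fin 1 → ℂ) →ₗ[ℂ] ℂ × ℂ := (LinearMap.proj 0).prod (-(LinearMap.proj 0))

lemma f1_sq (z : Fin 1 → ℂ) : f1 z * f1 z = algebraMap ℂ (ℂ × ℂ) (Qf 1 z) := by
  have h : Qf 1 z = z 0 ^ 2 := by rw [Qf_apply]; simp
  rw [h]
  simp [f1, Prod.ext_iff, pow_two]

def Φ1 : CliffordAlgebra (Qf 1) →ₐ[ℂ] ℂ × ℂ := CliffordAlgebra.lift (Qf 1) ⟨f1, f1_sq⟩

def E1 : CliffordAlgebra (Qf 1) := ι (Qf 1) (Pi.single 0 1)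

lemma E1_sq : E1 * E1 = 1 := by
  rw [E1, ι_sq_scalar, Qf_apply]
  simp

lemma iota1_eq (v : Fin 1 → ℂ) : ι (Qf 1) v = v 0 • E1 := by
  rw [E1, ← LinearMap.map_smul]
  congr 1
  funext i
  fin_cases i <;> simp

lemma mul_E1_mem {y : CliffordAlgebra (Qf 1)}
    (hy : y ∈ Submodule.span ℂ ({1, E1} : Set (CliffordAlgebra (Qf 1)))) :
    y * E1 ∈ Submodule.span ℂ ({1, E1} : Set (CliffordAlgebra (Qf 1))) := by
  induction hy using Submodule.span_induction with
  | mem x hx =>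
      rcases hx with rfl | rfl
      · rw [one_mul]; exact Submodule.subset_span (by simp)
      · rw [E1_sq]; exact Submodule.subset_span (by simp)
  | zero => rw [zero_mul]; exact Submodule.zero_mem _
  | add a b _ _ ha hb => rw [add_mul]; exact Submodule.add_mem _ ha hb
  | smul c a _ ha => rw [smul_mul_assoc]; exact Submodule.smul_mem _ _ ha

lemma mul_mem1 (x : CliffordAlgebra (Qf 1)) :
    ∀ y ∈ Submodule.span ℂ ({1, E1} : Set (CliffordAlgebra (Qf 1))),
      y * x ∈ Submodule.span ℂ ({1, E1} : Set (CliffordAlgebra (Qf 1))) := by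
  induction x using CliffordAlgebra.induction with
  | algebraMap r =>
      intro y hy
      rw [← Algebra.commutes r y, Algebra.algebraMap_eq_smul_one, smul_mul_assoc, one_mul]
      exact Submodule.smul_mem _ _ hy
  | ι v =>
      intro y hy
      rw [iota1_eq, mul_smul_comm]
      exact Submodule.smul_mem _ _ (mul_E1_mem hy)
  | add a b ha hb =>
      intro y hy; rw [mul_add]; exact Submodule.add_mem _ (ha y hy) (hb y hy)
  | mul a b ha hb =>
      intro y hy; rw [← mul_assoc]; exact hb _ (ha y hy)

lemma span1 (x : CliffordAlgebra (Qf 1)) :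
    x ∈ Submodule.span ℂ ({1, E1} : Set (CliffordAlgebra (Qf 1))) := by
  have := mul_mem1 x 1 (Submodule.subset_span (by simp))
  rwa [one_mul] at this

def L1 : (ℂ × ℂ) →ₗ[ℂ] CliffordAlgebra (Qf 1) where
  toFun p := ((p.1 + p.2)/2) • 1 + ((p.1 - p.2)/2) • E1
  map_add' p q := by
    simp only [Prod.fst_add, Prod.snd_add]
    module
  map_smul' c p := by
    simp only [Prod.smul_fst, Prod.smul_snd, smul_eq_mul, RingHom.id_apply]
    module

lemma Φ1_one : Φ1 1 = (1, 1) := map_one _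

lemma Φ1_E1 : Φ1 E1 = (1, -1) := by
  rw [E1, Φ1, CliffordAlgebra.lift_ι_apply]
  simp [f1, Prod.ext_iff]

lemma Φ1_L1 (p : ℂ × ℂ) : Φ1 (L1 p) = p := by
  simp only [L1, LinearMap.coe_mk, AddHom.coe_mk, map_add, _root_.map_smul, Φ1_E1, _root_.map_one]
  ext <;> simp <;> ring

lemma L1_Φ1 (x : CliffordAlgebra (Qf 1)) : L1 (Φ1 x) = x := by
  have h := span1 x
  induction h using Submodule.span_induction with
  | mem y hy =>
      rcases hy with rfl | rfl
      · rw [_root_.map_one]; simp [L1]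
      · rw [Φ1_E1]; simp [L1]
  | zero => simp
  | add a b _ _ ha hb => rw [map_add, map_add, ha, hb]
  | smul c a _ ha => rw [_root_.map_smul, _root_.map_smul, ha]

def equiv1 : CliffordAlgebra (Qf 1) ≃ₐ[ℂ] ℂ × ℂ :=
  AlgEquiv.ofBijective Φ1
    ⟨Function.LeftInverse.injective L1_Φ1, Function.RightInverse.surjective Φ1_L1⟩

/-! ### The two-dimensional case: `Cl(Qf 2) ≃ M₂(ℂ)` -/

def f2 : (Fin 2 → ℂ) →ₗ[ℂ] Matrix (Fin 2) (Fin 2) ℂ where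
  toFun z := !![z 0, z 1; z 1, -z 0]
  map_add' z w := by
    ext i j
    fin_cases i <;> fin_cases j <;> simp <;> ring
  map_smul' c z := by
    ext i j
    fin_cases i <;> fin_cases j <;> simp <;> ring

lemma f2_sq (z : Fin 2 → ℂ) : f2 z * f2 z = algebraMap ℂ (Matrix (Fin 2) (Fin 2) ℂ) (Qf 2 z) := by
  have h : Qf 2 z = z 0 ^ 2 + z 1 ^ 2 := by rw [Qf_apply]; simp [Fin.sum_univ_two]
  rw [h]
  simp only [f2, LinearMap.coe_mk, AddHom.coe_mk, Matrix.algebraMap_eq_diagonal]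
  ext i j
  fin_cases i <;> fin_cases j <;>
    simp [Matrix.mul_apply, Fin.sum_univ_two, Matrix.diagonal] <;> ring

def Φ2 : CliffordAlgebra (Qf 2) →ₐ[ℂ] Matrix (Fin 2) (Fin 2) ℂ :=
  CliffordAlgebra.lift (Qf 2) ⟨f2, f2_sq⟩

def E2 : CliffordAlgebra (Qf 2) := ι (Qf 2) (Pi.single 0 1)
def F2 : CliffordAlgebra (Qf 2) := ι (Qf 2) (Pi.single 1 1)

lemma E2_sq : E2 * E2 = 1 := by rw [E2, ι_sq_scalar, Qf_apply]; simp [Fin.sum_univ_two]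
lemma F2_sq : F2 * F2 = 1 := by rw [F2, ι_sq_scalar, Qf_apply]; simp [Fin.sum_univ_two]

lemma F2E2 : F2 * E2 = -(E2 * F2) := by
  rw [F2, E2, iota_anticomm]
  intro i
  fin_cases i <;> simp

lemma iota2_eq (v : Fin 2 → ℂ) : ι (Qf 2) v = v 0 • E2 + v 1 • F2 := by
  rw [E2, F2, ← LinearMap.map_smul, ← LinearMap.map_smul, ← LinearMap.map_add]
  congr 1
  funext i
  fin_cases i <;> simp

lemma mul_E2_mem {y : CliffordAlgebra (Qf 2)}
    (hy : y ∈ Submodule.span ℂ ({1, E2, F2, E2 * F2} : Set (CliffordAlgebra (Qf 2)))) :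
    y * E2 ∈ Submodule.span ℂ ({1, E2, F2, E2 * F2} : Set (CliffordAlgebra (Qf 2))) := by
  induction hy using Submodule.span_induction with
  | mem x hx =>
      rcases hx with rfl | rfl | rfl | rfl
      · rw [one_mul]; exact Submodule.subset_span (by simp)
      · rw [E2_sq]; exact Submodule.subset_span (by simp)
      · rw [F2E2]; exact Submodule.neg_mem _ (Submodule.subset_span (by simp))
      · rw [mul_assoc, F2E2, mul_neg, ← mul_assoc, E2_sq, one_mul]
        exact Submodule.neg_mem _ (Submodule.subset_span (by simp))
  | zero => rw [zero_mul]; exact Submodule.zero_mem _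
  | add a b _ _ ha hb => rw [add_mul]; exact Submodule.add_mem _ ha hb
  | smul c a _ ha => rw [smul_mul_assoc]; exact Submodule.smul_mem _ _ ha

lemma mul_F2_mem {y : CliffordAlgebra (Qf 2)}
    (hy : y ∈ Submodule.span ℂ ({1, E2, F2, E2 * F2} : Set (CliffordAlgebra (Qf 2)))) :
    y * F2 ∈ Submodule.span ℂ ({1, E2, F2, E2 * F2} : Set (CliffordAlgebra (Qf 2))) := by
  induction hy using Submodule.span_induction with
  | mem x hx =>
      rcases hx with rfl | rfl | rfl | rfl
      · rw [one_mul]; exact Submodule.subset_span (by simp)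
      · exact Submodule.subset_span (by simp)
      · rw [F2_sq]; exact Submodule.subset_span (by simp)
      · rw [mul_assoc, F2_sq, mul_one]; exact Submodule.subset_span (by simp)
  | zero => rw [zero_mul]; exact Submodule.zero_mem _
  | add a b _ _ ha hb => rw [add_mul]; exact Submodule.add_mem _ ha hb
  | smul c a _ ha => rw [smul_mul_assoc]; exact Submodule.smul_mem _ _ ha

lemma mul_mem2 (x : CliffordAlgebra (Qf 2)) :
    ∀ y ∈ Submodule.span ℂ ({1, E2, F2, E2 * F2} : Set (CliffordAlgebra (Qf 2))),
      y * x ∈ Submodule.span ℂ ({1, E2, F2, E2 * F2} : Set (CliffordAlgebra (Qf 2))) := by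
  induction x using CliffordAlgebra.induction with
  | algebraMap r =>
      intro y hy
      rw [← Algebra.commutes r y, Algebra.algebraMap_eq_smul_one, smul_mul_assoc, one_mul]
      exact Submodule.smul_mem _ _ hy
  | ι v =>
      intro y hy
      rw [iota2_eq, mul_add, mul_smul_comm, mul_smul_comm]
      exact Submodule.add_mem _ (Submodule.smul_mem _ _ (mul_E2_mem hy))
        (Submodule.smul_mem _ _ (mul_F2_mem hy))
  | add a b ha hb =>
      intro y hy; rw [mul_add]; exact Submodule.add_mem _ (ha y hy) (hb y hy)
  | mul a b ha hb =>
      intro y hy; rw [← mul_assoc]; exact hb _ (ha y hy)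

lemma span2 (x : CliffordAlgebra (Qf 2)) :
    x ∈ Submodule.span ℂ ({1, E2, F2, E2 * F2} : Set (CliffordAlgebra (Qf 2))) := by
  have := mul_mem2 x 1 (Submodule.subset_span (by simp))
  rwa [one_mul] at this

lemma Φ2_E2 : Φ2 E2 = !![1, 0; 0, -1] := by
  rw [E2, Φ2, CliffordAlgebra.lift_ι_apply]
  simp only [f2, LinearMap.coe_mk, AddHom.coe_mk]
  norm_num

lemma Φ2_F2 : Φ2 F2 = !![0, 1; 1, 0] := by
  rw [F2, Φ2, CliffordAlgebra.lift_ι_apply]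
  simp only [f2, LinearMap.coe_mk, AddHom.coe_mk]
  norm_num

lemma Φ2_E2F2 : Φ2 (E2 * F2) = !![0, 1; -1, 0] := by
  rw [_root_.map_mul, Φ2_E2, Φ2_F2]
  ext i j
  fin_cases i <;> fin_cases j <;> simp [Matrix.mul_apply, Fin.sum_univ_two]

def L2 : Matrix (Fin 2) (Fin 2) ℂ →ₗ[ℂ] CliffordAlgebra (Qf 2) where
  toFun M := ((M 0 0 + M 1 1)/2) • 1 + ((M 0 0 - M 1 1)/2) • E2
      + ((M 0 1 + M 1 0)/2) • F2 + ((M 0 1 - M 1 0)/2) • (E2 * F2)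
  map_add' M N := by
    simp only [Matrix.add_apply]
    module
  map_smul' c M := by
    simp only [Matrix.smul_apply, smul_eq_mul, RingHom.id_apply]
    module

lemma Φ2_L2 (M : Matrix (Fin 2) (Fin 2) ℂ) : Φ2 (L2 M) = M := by
  simp only [L2, LinearMap.coe_mk, AddHom.coe_mk, map_add, _root_.map_smul, Φ2_E2, Φ2_F2,
    Φ2_E2F2, _root_.map_one]
  ext i j
  fin_cases i <;> fin_cases j <;> simp <;> ring

lemma L2_Φ2 (x : CliffordAlgebra (Qf 2)) : L2 (Φ2 x) = x := by
  have h := span2 x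
  induction h using Submodule.span_induction with
  | mem y hy =>
      rcases hy with rfl | rfl | rfl | rfl
      · rw [_root_.map_one]; simp [L2]
      · rw [Φ2_E2]; simp [L2]
      · rw [Φ2_F2]; simp [L2]
      · rw [Φ2_E2F2]; simp [L2]
  | zero => simp
  | add a b _ _ ha hb => rw [map_add, map_add, ha, hb]
  | smul c a _ ha => rw [_root_.map_smul, _root_.map_smul, ha]

def equiv2 : CliffordAlgebra (Qf 2) ≃ₐ[ℂ] Matrix (Fin 2) (Fin 2) ℂ :=
  AlgEquiv.ofBijective Φ2
    ⟨Function.LeftInverse.injective L2_Φ2, Function.RightInverse.surjective Φ2_L2⟩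

/-! ### The inductive step: `Cl(Qf (m+2)) ≃ M₂(Cl(Qf m))` -/

section Step

variable (m : ℕ)

/-- Inclusion of `ℂ^m` in the first `m` coordinates of `ℂ^{m+2}`. -/
def incl : (Fin m → ℂ) →ₗ[ℂ] (Fin (m + 2) → ℂ) :=
  Function.ExtendByZero.linearMap ℂ (Fin.castAdd 2)

/-- Inclusion of `ℂ²` in the last two coordinates of `ℂ^{m+2}`. -/
def incl2 : (Fin 2 → ℂ) →ₗ[ℂ] (Fin (m + 2) → ℂ) :=
  Function.ExtendByZero.linearMap ℂ (Fin.natAdd m)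

/-- Restriction to the first `m` coordinates. -/
def res : (Fin (m + 2) → ℂ) →ₗ[ℂ] (Fin m → ℂ) := LinearMap.funLeft ℂ ℂ (Fin.castAdd 2)

variable {m}

lemma incl_castAdd (v : Fin m → ℂ) (i : Fin m) : incl m v (Fin.castAdd 2 i) = v i := by
  simp only [incl, Function.ExtendByZero.linearMap_apply]
  exact Function.Injective.extend_apply (Fin.castAdd_injective m 2) _ _ _

lemma incl_natAdd (v : Fin m → ℂ) (j : Fin 2) : incl m v (Fin.natAdd m j) = 0 := by
  simp only [incl, Function.ExtendByZero.linearMap_apply]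
  rw [Function.extend_apply']
  · rfl
  · rintro ⟨i, hi⟩
    have := congrArg Fin.val hi
    simp [Fin.castAdd, Fin.natAdd] at this
    omega

lemma incl2_natAdd (w : Fin 2 → ℂ) (j : Fin 2) : incl2 m w (Fin.natAdd m j) = w j := by
  simp only [incl2, Function.ExtendByZero.linearMap_apply]
  exact Function.Injective.extend_apply (fun a b h => by
    simpa [Fin.ext_iff, Fin.natAdd] using congrArg Fin.val h) _ _ _

lemma incl2_castAdd (w : Fin 2 → ℂ) (i : Fin m) : incl2 m w (Fin.castAdd 2 i) = 0 := by
  simp only [incl2, Function.ExtendByZero.linearMap_apply]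
  rw [Function.extend_apply']
  · rfl
  · rintro ⟨j, hj⟩
    have := congrArg Fin.val hj
    simp [Fin.castAdd, Fin.natAdd] at this
    omega

lemma res_incl (v : Fin m → ℂ) : res m (incl m v) = v := by
  funext i
  simp only [res, LinearMap.funLeft_apply]
  exact incl_castAdd v i

lemma Qf_incl (v : Fin m → ℂ) : Qf (m + 2) (incl m v) = Qf m v := by
  rw [Qf_apply, Qf_apply, Fin.sum_univ_add]
  simp [incl_castAdd, incl_natAdd]

lemma Qf_incl2 (w : Fin 2 → ℂ) : Qf (m + 2) (incl2 m w) = Qf 2 w := by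
  rw [Qf_apply, Qf_apply, Fin.sum_univ_add]
  simp [incl2_castAdd, incl2_natAdd]

variable (m)

/-- The isometry `Qf m →qᵢ Qf (m+2)`. -/
def isom : Qf m →qᵢ Qf (m + 2) := ⟨incl m, Qf_incl⟩

/-- The isometry `Qf 2 →qᵢ Qf (m+2)`. -/
def isom2 : Qf 2 →qᵢ Qf (m + 2) := ⟨incl2 m, Qf_incl2⟩

/-- The last-two basis vectors of `ℂ^{m+2}`. -/
def eE : Fin (m + 2) → ℂ := Pi.single (Fin.natAdd m 0) 1
def eF : Fin (m + 2) → ℂ := Pi.single (Fin.natAdd m 1) 1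

def EE : CliffordAlgebra (Qf (m + 2)) := ι _ (eE m)
def FF : CliffordAlgebra (Qf (m + 2)) := ι _ (eF m)

variable {m}

lemma Qf_single (M : ℕ) (j : Fin M) : Qf M (Pi.single j 1) = 1 := by
  rw [Qf_apply]
  rw [Finset.sum_eq_single j] <;> simp +contextual [Pi.single_apply]

lemma EE_sq : EE m * EE m = 1 := by
  rw [EE, ι_sq_scalar, eE, Qf_single]; exact map_one _

lemma FF_sq : FF m * FF m = 1 := by
  rw [FF, ι_sq_scalar, eF, Qf_single]; exact map_one _

lemma FE_anticomm : FF m * EE m = -(EE m * FF m) := by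
  rw [FF, EE, iota_anticomm]
  intro i
  rw [eE, eF, Pi.single_apply, Pi.single_apply]
  rcases eq_or_ne i (Fin.natAdd m 0) with rfl | h
  · have : Fin.natAdd m 0 ≠ Fin.natAdd m (1 : Fin 2) := by simp [Fin.ext_iff]
    simp [this]
  · simp [h]

lemma U_E_anticomm (v : Fin m → ℂ) :
    ι (Qf (m + 2)) (incl m v) * EE m = -(EE m * ι (Qf (m + 2)) (incl m v)) := by
  rw [EE, iota_anticomm]
  intro i
  rw [eE, Pi.single_apply]
  rcases eq_or_ne i (Fin.natAdd m 0) with rfl | h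
  · rw [incl_natAdd, zero_mul]
  · simp [h]

lemma U_F_anticomm (v : Fin m → ℂ) :
    ι (Qf (m + 2)) (incl m v) * FF m = -(FF m * ι (Qf (m + 2)) (incl m v)) := by
  rw [FF, iota_anticomm]
  intro i
  rw [eF, Pi.single_apply]
  rcases eq_or_ne i (Fin.natAdd m 1) with rfl | h
  · rw [incl_natAdd, zero_mul]
  · simp [h]

end Step

section Phi

variable {B : Type*} [Ring B] [Algebra ℂ B]

lemma Ismul_sq {q : ℂ} (u : B) (hu : u * u = algebraMap ℂ B q) :
    (Complex.I • u) * (Complex.I • u) = -(algebraMap ℂ B q) := by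
  rw [smul_mul_assoc, mul_smul_comm, smul_smul, Complex.I_mul_I, hu, neg_one_smul]

lemma Ismul_comm (b : ℂ) (u : B) :
    (Complex.I • u) * algebraMap ℂ B b = algebraMap ℂ B b * (Complex.I • u) := by
  rw [smul_mul_assoc, ← Algebra.commutes b u, mul_smul_comm]

lemma aux_diag (b q : ℂ) (u : B) (hu : u * u = algebraMap ℂ B q) :
    (algebraMap ℂ B b - Complex.I • u) * (algebraMap ℂ B b + Complex.I • u)
      = algebraMap ℂ B (b ^ 2 + q) := by
  rw [sub_mul, mul_add, mul_add, Ismul_comm, Ismul_sq u hu, ← _root_.map_mul,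
    _root_.map_add, pow_two]
  abel

lemma aux_diag' (b q : ℂ) (u : B) (hu : u * u = algebraMap ℂ B q) :
    (algebraMap ℂ B b + Complex.I • u) * (algebraMap ℂ B b - Complex.I • u)
      = algebraMap ℂ B (b ^ 2 + q) := by
  rw [add_mul, mul_sub, mul_sub, Ismul_comm, Ismul_sq u hu, ← _root_.map_mul,
    _root_.map_add, pow_two]
  abel

lemma aux_off (a : ℂ) (x : B) : algebraMap ℂ B a * x + x * -(algebraMap ℂ B a) = 0 := by
  rw [mul_neg, Algebra.commutes a x]
  abel

lemma aux_off' (a : ℂ) (x : B) : x * algebraMap ℂ B a + -(algebraMap ℂ B a) * x = 0 := by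
  rw [neg_mul, Algebra.commutes a x]
  abel

lemma algebraMap_M2 (q : ℂ) :
    algebraMap ℂ (Matrix (Fin 2) (Fin 2) B) q = !![algebraMap ℂ B q, 0; 0, algebraMap ℂ B q] := by
  rw [Matrix.algebraMap_eq_diagonal]
  rw [Matrix.eta_fin_two (Matrix.diagonal _)]
  simp [Matrix.diagonal]

end Phi

section Step2

variable (m : ℕ)

lemma Qf_split (z : Fin (m + 2) → ℂ) :
    Qf (m + 2) z = z (Fin.natAdd m 0) ^ 2 + z (Fin.natAdd m 1) ^ 2 + Qf m (res m z) := by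
  rw [Qf_apply, Qf_apply, Fin.sum_univ_add, Fin.sum_univ_two]
  simp only [res, LinearMap.funLeft_apply]
  ring

/-- The linear map underlying `Φ`. -/
def fΦ : (Fin (m + 2) → ℂ) →ₗ[ℂ] Matrix (Fin 2) (Fin 2) (CliffordAlgebra (Qf m)) where
  toFun z :=
    !![algebraMap ℂ _ (z (Fin.natAdd m 0)),
        algebraMap ℂ _ (z (Fin.natAdd m 1)) - Complex.I • ι (Qf m) (res m z);
      algebraMap ℂ _ (z (Fin.natAdd m 1)) + Complex.I • ι (Qf m) (res m z),
        -(algebraMap ℂ _ (z (Fin.natAdd m 0)))]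
  map_add' z w := by
    ext i j
    fin_cases i <;> fin_cases j <;>
      simp [map_add, smul_add] <;> abel
  map_smul' c z := by
    ext i j
    fin_cases i <;> fin_cases j <;>
      simp [Algebra.algebraMap_eq_smul_one, smul_smul, smul_sub, smul_add, mul_comm] <;>
      rw [smul_comm c Complex.I]

lemma fΦ_sq (z : Fin (m + 2) → ℂ) :
    fΦ m z * fΦ m z = algebraMap ℂ _ (Qf (m + 2) z) := by
  have hu : ι (Qf m) (res m z) * ι (Qf m) (res m z)
      = algebraMap ℂ _ (Qf m (res m z)) := ι_sq_scalar _ _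
  rw [Qf_split, algebraMap_M2]
  show (!![_,_;_,_] : Matrix (Fin 2) (Fin 2) _) * !![_,_;_,_] = _
  rw [Matrix.mul_fin_two]
  set a := z (Fin.natAdd m 0)
  set b := z (Fin.natAdd m 1)
  set u := ι (Qf m) (res m z)
  ext i j
  fin_cases i <;> fin_cases j <;> simp only [Matrix.cons_val_zero, Matrix.cons_val_one,
    Matrix.head_cons, Matrix.cons_val', Matrix.empty_val', Matrix.cons_val_fin_one,
    Matrix.head_fin_const, Fin.mk_zero, Fin.mk_one, Fin.isValue]
  · rw [aux_diag _ _ _ hu, ← _root_.map_mul, ← _root_.map_add, ← pow_two]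
    ring_nf
    simp
  · exact aux_off a (algebraMap ℂ (CliffordAlgebra (Qf m)) b - Complex.I • u)
  · exact aux_off' a (algebraMap ℂ (CliffordAlgebra (Qf m)) b + Complex.I • u)
  · rw [aux_diag' _ _ _ hu, neg_mul_neg, ← _root_.map_mul, ← _root_.map_add, ← pow_two]
    ring_nf
    simp

end Step2

section Step3

variable (m : ℕ)

/-- The forward algebra homomorphism `Cl(Qf (m+2)) → M₂(Cl(Qf m))`. -/
def Φ : CliffordAlgebra (Qf (m + 2)) →ₐ[ℂ] Matrix (Fin 2) (Fin 2) (CliffordAlgebra (Qf m)) :=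
  CliffordAlgebra.lift _ ⟨fΦ m, fΦ_sq m⟩

variable {m}

lemma Φ_ι (z : Fin (m + 2) → ℂ) : Φ m (ι _ z) = fΦ m z :=
  CliffordAlgebra.lift_ι_apply _ _ _

lemma castAdd_ne_natAdd (i : Fin m) (j : Fin 2) : Fin.castAdd 2 i ≠ Fin.natAdd m j := by
  have hlt := i.isLt
  intro h
  have h2 := congrArg Fin.val h
  simp only [Fin.coe_castAdd, Fin.coe_natAdd] at h2
  omega

lemma res_eE : res m (eE m) = 0 := by
  funext i
  simp only [res, LinearMap.funLeft_apply, eE, Pi.zero_apply]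
  exact Pi.single_eq_of_ne (castAdd_ne_natAdd i 0) 1

lemma res_eF : res m (eF m) = 0 := by
  funext i
  simp only [res, LinearMap.funLeft_apply, eF, Pi.zero_apply]
  exact Pi.single_eq_of_ne (castAdd_ne_natAdd i 1) 1

lemma natAdd_inj {j k : Fin 2} (h : Fin.natAdd m j = Fin.natAdd m k) : j = k := by
  simp only [Fin.ext_iff, Fin.natAdd] at h ⊢
  omega

lemma eE_val (j : Fin 2) : eE m (Fin.natAdd m j) = if j = 0 then 1 else 0 := by
  rcases eq_or_ne j 0 with rfl | h
  · simp [eE]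
  · rw [if_neg h, eE]
    exact Pi.single_eq_of_ne (fun hc => h (natAdd_inj hc)) 1

lemma eF_val (j : Fin 2) : eF m (Fin.natAdd m j) = if j = 1 then 1 else 0 := by
  rcases eq_or_ne j 1 with rfl | h
  · simp [eF]
  · rw [if_neg h, eF]
    exact Pi.single_eq_of_ne (fun hc => h (natAdd_inj hc)) 1

lemma Φ_EE : Φ m (EE m) = !![1, 0; 0, -1] := by
  rw [EE, Φ_ι]
  show (!![_,_;_,_] : Matrix (Fin 2) (Fin 2) _) = _
  rw [res_eE]
  simp [eE_val (m := m) 0, eE_val (m := m) 1]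

lemma Φ_FF : Φ m (FF m) = !![0, 1; 1, 0] := by
  rw [FF, Φ_ι]
  show (!![_,_;_,_] : Matrix (Fin 2) (Fin 2) _) = _
  rw [res_eF]
  simp [eF_val (m := m) 0, eF_val (m := m) 1]

lemma Φ_incl (v : Fin m → ℂ) :
    Φ m (ι _ (incl m v)) =
      !![0, -(Complex.I • ι (Qf m) v); Complex.I • ι (Qf m) v, 0] := by
  rw [Φ_ι]
  show (!![_,_;_,_] : Matrix (Fin 2) (Fin 2) _) = _
  rw [res_incl, incl_natAdd, incl_natAdd]
  norm_num

/-! Relations in `Cl(Qf (m+2))`. -/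

lemma EU (v : Fin m → ℂ) :
    EE m * ι (Qf (m + 2)) (incl m v) = -(ι (Qf (m + 2)) (incl m v) * EE m) := by
  rw [U_E_anticomm v, neg_neg]

lemma FU (v : Fin m → ℂ) :
    FF m * ι (Qf (m + 2)) (incl m v) = -(ι (Qf (m + 2)) (incl m v) * FF m) := by
  rw [U_F_anticomm v, neg_neg]

lemma EE_sq' (x : CliffordAlgebra (Qf (m + 2))) : EE m * (EE m * x) = x := by
  rw [← mul_assoc, EE_sq, one_mul]

lemma FF_sq' (x : CliffordAlgebra (Qf (m + 2))) : FF m * (FF m * x) = x := by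
  rw [← mul_assoc, FF_sq, one_mul]

lemma FE' (x : CliffordAlgebra (Qf (m + 2))) :
    FF m * (EE m * x) = -(EE m * (FF m * x)) := by
  rw [← mul_assoc, FE_anticomm, neg_mul, mul_assoc]

lemma EU' (v : Fin m → ℂ) (x : CliffordAlgebra (Qf (m + 2))) :
    EE m * (ι (Qf (m + 2)) (incl m v) * x)
      = -(ι (Qf (m + 2)) (incl m v) * (EE m * x)) := by
  rw [← mul_assoc, EU, neg_mul, mul_assoc]

lemma FU' (v : Fin m → ℂ) (x : CliffordAlgebra (Qf (m + 2))) :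
    FF m * (ι (Qf (m + 2)) (incl m v) * x)
      = -(ι (Qf (m + 2)) (incl m v) * (FF m * x)) := by
  rw [← mul_assoc, FU, neg_mul, mul_assoc]

lemma W_sq : (EE m * FF m) * (EE m * FF m) = -1 := by
  simp only [mul_assoc, mul_neg, neg_mul, neg_neg, FE', EE_sq', FF_sq', EU, FU, FE_anticomm,
    EE_sq, FF_sq, mul_one, one_mul]

lemma WU_comm (v : Fin m → ℂ) :
    (EE m * FF m) * ι (Qf (m + 2)) (incl m v) = ι (Qf (m + 2)) (incl m v) * (EE m * FF m) := by
  simp only [mul_assoc, mul_neg, neg_mul, neg_neg, FE' , EU', FU', EE_sq', FF_sq', EU, FU,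
    FE_anticomm, EE_sq, FF_sq, mul_one, one_mul]

lemma XE_comm (v : Fin m → ℂ) :
    (ι (Qf (m + 2)) (incl m v) * (EE m * FF m)) * EE m
      = EE m * (ι (Qf (m + 2)) (incl m v) * (EE m * FF m)) := by
  simp only [mul_assoc, mul_neg, neg_mul, neg_neg, FE', EU', FU', EE_sq', FF_sq', EU, FU,
    FE_anticomm, EE_sq, FF_sq, mul_one, one_mul]

lemma XF_comm (v : Fin m → ℂ) :
    (ι (Qf (m + 2)) (incl m v) * (EE m * FF m)) * FF m
      = FF m * (ι (Qf (m + 2)) (incl m v) * (EE m * FF m)) := by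
  simp only [mul_assoc, mul_neg, neg_mul, neg_neg, FE', EU', FU', EE_sq', FF_sq', EU, FU,
    FE_anticomm, EE_sq, FF_sq, mul_one, one_mul]

variable (m)

/-- The linear map underlying `g : Cl(Qf m) → Cl(Qf (m+2))`. -/
def fg : (Fin m → ℂ) →ₗ[ℂ] CliffordAlgebra (Qf (m + 2)) :=
  (-Complex.I) • ((LinearMap.mulRight ℂ (EE m * FF m)).comp
    ((CliffordAlgebra.ι (Qf (m + 2))).comp (incl m)))

variable {m}

lemma fg_apply (v : Fin m → ℂ) :
    fg m v = (-Complex.I) • (ι (Qf (m + 2)) (incl m v) * (EE m * FF m)) := rfl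

lemma fg_sq (v : Fin m → ℂ) :
    fg m v * fg m v = algebraMap ℂ _ (Qf m v) := by
  rw [fg_apply]
  set U := ι (Qf (m + 2)) (incl m v)
  set W := EE m * FF m
  have hUU : U * U = algebraMap ℂ _ (Qf m v) := by
    rw [ι_sq_scalar, Qf_incl]
  have hX : (U * W) * (U * W) = -(algebraMap ℂ _ (Qf m v)) := by
    have h1 : (U * W) * (U * W) = U * (U * (W * W)) := by
      rw [mul_assoc U W, ← mul_assoc W U, WU_comm, mul_assoc, mul_assoc]
    rw [h1, ← mul_assoc, hUU, W_sq, mul_neg_one]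
  rw [smul_mul_assoc, mul_smul_comm, hX, smul_smul]
  simp [Complex.I_mul_I]

variable (m)

/-- `g : Cl(Qf m) →ₐ Cl(Qf (m+2))`. -/
def gg : CliffordAlgebra (Qf m) →ₐ[ℂ] CliffordAlgebra (Qf (m + 2)) :=
  CliffordAlgebra.lift _ ⟨fg m, fg_sq⟩

/-- `h : M₂(ℂ) →ₐ Cl(Qf (m+2))`. -/
def hh : Matrix (Fin 2) (Fin 2) ℂ →ₐ[ℂ] CliffordAlgebra (Qf (m + 2)) :=
  (CliffordAlgebra.map (isom2 m)).comp equiv2.symm.toAlgHom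

variable {m}

lemma gg_ι (v : Fin m → ℂ) : gg m (ι _ v) = fg m v := CliffordAlgebra.lift_ι_apply _ _ _

lemma incl2_eq (w : Fin 2 → ℂ) : incl2 m w = w 0 • eE m + w 1 • eF m := by
  funext i
  refine Fin.addCases (fun i => ?_) (fun j => ?_) i
  · have h0 : eE m (Fin.castAdd 2 i) = 0 := Pi.single_eq_of_ne (castAdd_ne_natAdd i 0) 1
    have h1 : eF m (Fin.castAdd 2 i) = 0 := Pi.single_eq_of_ne (castAdd_ne_natAdd i 1) 1
    simp [incl2_castAdd, h0, h1]
  · rw [Pi.add_apply, Pi.smul_apply, Pi.smul_apply, incl2_natAdd, eE_val, eF_val]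
    fin_cases j <;> simp

end Step3

section Step4

variable {m : ℕ}

lemma comm_fg (v : Fin m → ℂ) (x : CliffordAlgebra (Qf 2)) :
    Commute (fg m v) (CliffordAlgebra.map (isom2 m) x) := by
  induction x using CliffordAlgebra.induction with
  | algebraMap r =>
      rw [AlgHom.commutes]
      exact (Algebra.commutes r (fg m v)).symm
  | ι w =>
      rw [CliffordAlgebra.map_apply_ι]
      show Commute _ (ι (Qf (m + 2)) (incl2 m w))
      rw [incl2_eq, map_add, _root_.map_smul, _root_.map_smul, fg_apply]
      refine Commute.smul_left ?_ _
      refine Commute.add_right (Commute.smul_right ?_ _) (Commute.smul_right ?_ _)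
      · exact XE_comm v
      · exact XF_comm v
  | mul x y hx hy => rw [_root_.map_mul]; exact Commute.mul_right hx hy
  | add x y hx hy => rw [map_add]; exact Commute.add_right hx hy

lemma comm_g (a : CliffordAlgebra (Qf m)) (x : CliffordAlgebra (Qf 2)) :
    Commute (gg m a) (CliffordAlgebra.map (isom2 m) x) := by
  induction a using CliffordAlgebra.induction with
  | algebraMap r => rw [AlgHom.commutes]; exact Algebra.commutes r _
  | ι v => rw [gg_ι]; exact comm_fg v x
  | mul a b ha hb => rw [_root_.map_mul]; exact Commute.mul_left ha hb
  | add a b ha hb => rw [map_add]; exact Commute.add_left ha hb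

lemma hcomm (a : CliffordAlgebra (Qf m)) (b : Matrix (Fin 2) (Fin 2) ℂ) :
    Commute (gg m a) (hh m b) :=
  comm_g a (equiv2.symm b)

variable (m)

/-- The inverse algebra homomorphism `M₂(Cl(Qf m)) → Cl(Qf (m+2))`. -/
def Ψ : Matrix (Fin 2) (Fin 2) (CliffordAlgebra (Qf m)) →ₐ[ℂ] CliffordAlgebra (Qf (m + 2)) :=
  (Algebra.TensorProduct.lift (gg m) (hh m) hcomm).comp
    (matrixEquivTensor (Fin 2) ℂ (CliffordAlgebra (Qf m))).toAlgHom

variable {m}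

lemma equiv2_symm_eq (M : Matrix (Fin 2) (Fin 2) ℂ) : equiv2.symm M = L2 M := by
  apply equiv2.injective
  rw [AlgEquiv.apply_symm_apply]
  exact (Φ2_L2 M).symm

lemma incl2_single0 : incl2 m (Pi.single 0 1) = eE m := by
  rw [incl2_eq]
  simp

lemma incl2_single1 : incl2 m (Pi.single 1 1) = eF m := by
  rw [incl2_eq]
  simp

lemma map_isom2_E2 : CliffordAlgebra.map (isom2 m) E2 = EE m := by
  rw [E2, CliffordAlgebra.map_apply_ι, EE]
  show ι _ (incl2 m (Pi.single 0 1)) = _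
  rw [incl2_single0]

lemma map_isom2_F2 : CliffordAlgebra.map (isom2 m) F2 = FF m := by
  rw [F2, CliffordAlgebra.map_apply_ι, FF]
  show ι _ (incl2 m (Pi.single 1 1)) = _
  rw [incl2_single1]

lemma hh_apply (M : Matrix (Fin 2) (Fin 2) ℂ) :
    hh m M = ((M 0 0 + M 1 1)/2) • 1 + ((M 0 0 - M 1 1)/2) • EE m
      + ((M 0 1 + M 1 0)/2) • FF m + ((M 0 1 - M 1 0)/2) • (EE m * FF m) := by
  show CliffordAlgebra.map (isom2 m) (equiv2.symm M) = _
  rw [equiv2_symm_eq]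
  simp only [L2, LinearMap.coe_mk, AddHom.coe_mk, map_add, _root_.map_smul, _root_.map_one,
    _root_.map_mul, map_isom2_E2, map_isom2_F2]

lemma Ψ_apply (M : Matrix (Fin 2) (Fin 2) (CliffordAlgebra (Qf m))) :
    Ψ m M = gg m (M 0 0) * hh m (Matrix.single 0 0 1)
      + gg m (M 0 1) * hh m (Matrix.single 0 1 1)
      + gg m (M 1 0) * hh m (Matrix.single 1 0 1)
      + gg m (M 1 1) * hh m (Matrix.single 1 1 1) := by
  show (Algebra.TensorProduct.lift (gg m) (hh m) hcomm) (matrixEquivTensor (Fin 2) ℂ (CliffordAlgebra (Qf m)) M) = _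
  rw [matrixEquivTensor_apply, map_sum, Fintype.sum_prod_type]
  rw [Fin.sum_univ_two]
  rw [Fin.sum_univ_two, Fin.sum_univ_two]
  simp only [Algebra.TensorProduct.lift_tmul]
  abel

end Step4

section Assemble

variable {B : Type*} [Ring B] [Algebra ℂ B]

lemma assemble (a b : ℂ) (U E F : B)
    (hE : E * E = 1) (hF : F * F = 1) (hFE : F * E = -(E * F)) :
    algebraMap ℂ B a * ((2⁻¹:ℂ) • 1 + (2⁻¹:ℂ) • E)
      + (algebraMap ℂ B b - U * (E * F)) * ((2⁻¹:ℂ) • F + (2⁻¹:ℂ) • (E * F))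
      + (algebraMap ℂ B b + U * (E * F)) * ((2⁻¹:ℂ) • F - (2⁻¹:ℂ) • (E * F))
      + (-(algebraMap ℂ B a)) * ((2⁻¹:ℂ) • 1 - (2⁻¹:ℂ) • E)
      = a • E + b • F + U := by
  have h1 : (E * F) * F = E := by rw [mul_assoc, hF, mul_one]
  have h2 : (E * F) * (E * F) = -1 := by
    have : (E * F) * (E * F) = E * ((F * E) * F) := by rw [mul_assoc, mul_assoc]
    rw [this, hFE, neg_mul, mul_neg, h1, hE]
  have h3 : (U * (E * F)) * F = U * E := by rw [mul_assoc, h1]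
  have h4 : (U * (E * F)) * (E * F) = -U := by rw [mul_assoc, h2, mul_neg_one]
  simp only [mul_add, mul_sub, sub_mul, add_mul, neg_mul, mul_smul_comm, smul_mul_assoc,
    h1, h2, h3, h4, mul_one, ← Algebra.smul_def]
  module

end Assemble

section Step5

variable {m : ℕ}

lemma decompose_z (z : Fin (m + 2) → ℂ) :
    z = incl m (res m z) + z (Fin.natAdd m 0) • eE m + z (Fin.natAdd m 1) • eF m := by
  funext i
  refine Fin.addCases (fun i => ?_) (fun j => ?_) i
  · have h0 : eE m (Fin.castAdd 2 i) = 0 := Pi.single_eq_of_ne (castAdd_ne_natAdd i 0) 1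
    have h1 : eF m (Fin.castAdd 2 i) = 0 := Pi.single_eq_of_ne (castAdd_ne_natAdd i 1) 1
    simp only [Pi.add_apply, Pi.smul_apply, h0, h1, smul_zero, add_zero, incl_castAdd]
    simp [res]
  · rw [Pi.add_apply, Pi.add_apply, Pi.smul_apply, Pi.smul_apply, incl_natAdd, eE_val, eF_val]
    fin_cases j <;> simp

lemma P00 : hh m (Matrix.single 0 0 1) = (2⁻¹:ℂ) • 1 + (2⁻¹:ℂ) • EE m := by
  rw [hh_apply]
  norm_num

lemma P01 : hh m (Matrix.single 0 1 1) = (2⁻¹:ℂ) • FF m + (2⁻¹:ℂ) • (EE m * FF m) := by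
  rw [hh_apply]
  norm_num

lemma P10 : hh m (Matrix.single 1 0 1) = (2⁻¹:ℂ) • FF m - (2⁻¹:ℂ) • (EE m * FF m) := by
  rw [hh_apply]
  norm_num
  module

lemma P11 : hh m (Matrix.single 1 1 1) = (2⁻¹:ℂ) • 1 - (2⁻¹:ℂ) • EE m := by
  rw [hh_apply]
  norm_num
  module

lemma gg_Ismul (v : Fin m → ℂ) :
    gg m (Complex.I • ι (Qf m) v) = ι (Qf (m + 2)) (incl m v) * (EE m * FF m) := by
  rw [_root_.map_smul, gg_ι, fg_apply, smul_smul]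
  simp [Complex.I_mul_I]

lemma ΨΦ_ι (z : Fin (m + 2) → ℂ) : Ψ m (Φ m (ι _ z)) = ι _ z := by
  rw [Φ_ι]
  have hM : fΦ m z = !![algebraMap ℂ _ (z (Fin.natAdd m 0)),
      algebraMap ℂ _ (z (Fin.natAdd m 1)) - Complex.I • ι (Qf m) (res m z);
    algebraMap ℂ _ (z (Fin.natAdd m 1)) + Complex.I • ι (Qf m) (res m z),
      -(algebraMap ℂ _ (z (Fin.natAdd m 0)))] := rfl
  rw [hM, Ψ_apply, P00, P01, P10, P11]
  simp only [Matrix.of_apply, Matrix.cons_val', Matrix.cons_val_zero, Matrix.cons_val_one,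
    Matrix.head_cons, Matrix.empty_val', Matrix.cons_val_fin_one, Matrix.head_fin_const]
  rw [map_sub, map_add, AlgHom.commutes, AlgHom.commutes, map_neg, AlgHom.commutes, gg_Ismul]
  rw [assemble _ _ _ _ _ EE_sq FF_sq FE_anticomm]
  conv_rhs => rw [decompose_z z]
  rw [map_add, map_add, _root_.map_smul, _root_.map_smul]
  have hEE : ι (Qf (m + 2)) (eE m) = EE m := rfl
  have hFF : ι (Qf (m + 2)) (eF m) = FF m := rfl
  rw [hEE, hFF]
  abel

end Step5

section Step6

variable {m : ℕ}

lemma diag_mul (a b : CliffordAlgebra (Qf m)) :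
    (!![a,0;0,a] : Matrix (Fin 2) (Fin 2) _) * !![b,0;0,b] = !![a*b,0;0,a*b] := by
  rw [Matrix.mul_fin_two]
  norm_num

lemma Φ_gg (a : CliffordAlgebra (Qf m)) : Φ m (gg m a) = !![a, 0; 0, a] := by
  induction a using CliffordAlgebra.induction with
  | algebraMap r =>
      rw [AlgHom.commutes, AlgHom.commutes, algebraMap_M2]
  | ι v =>
      rw [gg_ι, fg_apply, _root_.map_smul, _root_.map_mul, _root_.map_mul, Φ_incl, Φ_EE, Φ_FF]
      rw [Matrix.mul_fin_two, Matrix.mul_fin_two]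
      ext i j
      fin_cases i <;> fin_cases j <;>
        simp [smul_smul, Complex.I_mul_I]
  | mul a b ha hb => rw [_root_.map_mul, _root_.map_mul, ha, hb, diag_mul]
  | add a b ha hb =>
      rw [map_add, map_add, ha, hb]
      ext i j
      fin_cases i <;> fin_cases j <;> simp

lemma res_incl2 (w : Fin 2 → ℂ) : res m (incl2 m w) = 0 := by
  funext i
  simp only [res, LinearMap.funLeft_apply, Pi.zero_apply]
  exact incl2_castAdd w i

lemma Φ_map_isom2 (x : CliffordAlgebra (Qf 2)) :
    Φ m (CliffordAlgebra.map (isom2 m) x)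
      = (algebraMap ℂ (CliffordAlgebra (Qf m))).mapMatrix (equiv2 x) := by
  induction x using CliffordAlgebra.induction with
  | algebraMap r =>
      rw [AlgHom.commutes, AlgHom.commutes, AlgEquiv.commutes]
      rw [RingHom.mapMatrix_apply, algebraMap_M2, algebraMap_M2 (B := ℂ)]
      ext i j
      fin_cases i <;> fin_cases j <;> simp
  | ι w =>
      rw [CliffordAlgebra.map_apply_ι]
      have h1 : Φ m (ι _ ((isom2 m) w)) = fΦ m (incl2 m w) := Φ_ι _
      rw [h1]
      have h2 : equiv2 (ι _ w) = f2 w := CliffordAlgebra.lift_ι_apply _ _ _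
      rw [h2, RingHom.mapMatrix_apply]
      show (!![_,_;_,_] : Matrix (Fin 2) (Fin 2) _) = _
      rw [res_incl2, incl2_natAdd, incl2_natAdd]
      ext i j
      fin_cases i <;> fin_cases j <;> simp [f2]
  | mul x y hx hy =>
      rw [_root_.map_mul, _root_.map_mul, _root_.map_mul, hx, hy, _root_.map_mul]
  | add x y hx hy =>
      rw [map_add, map_add, map_add, hx, hy, map_add]

lemma Φ_hh (b : Matrix (Fin 2) (Fin 2) ℂ) :
    Φ m (hh m b) = b.map (algebraMap ℂ _) := by
  obtain ⟨x, rfl⟩ := equiv2.surjective b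
  have h : hh m (equiv2 x) = CliffordAlgebra.map (isom2 m) x := by
    show CliffordAlgebra.map (isom2 m) (equiv2.symm (equiv2 x)) = _
    rw [AlgEquiv.symm_apply_apply]
  rw [h, Φ_map_isom2, RingHom.mapMatrix_apply]

lemma map_std (i j : Fin 2) :
    (Matrix.single i j (1:ℂ)).map (algebraMap ℂ (CliffordAlgebra (Qf m)))
      = Matrix.single i j (1 : CliffordAlgebra (Qf m)) := by
  ext k l
  simp [Matrix.single, Matrix.map_apply, apply_ite]

lemma diag_mul_std (a : CliffordAlgebra (Qf m)) (i j : Fin 2) :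
    (!![a,0;0,a] : Matrix (Fin 2) (Fin 2) _) * Matrix.single i j 1
      = Matrix.single i j a := by
  ext k l
  fin_cases i <;> fin_cases j <;> fin_cases k <;> fin_cases l <;>
    simp [Matrix.mul_apply, Fin.sum_univ_two, Matrix.single]

lemma ΦΨ_id (M : Matrix (Fin 2) (Fin 2) (CliffordAlgebra (Qf m))) :
    Φ m (Ψ m M) = M := by
  rw [Ψ_apply]
  simp only [map_add, _root_.map_mul, Φ_gg, Φ_hh, map_std, diag_mul_std]
  ext i j
  fin_cases i <;> fin_cases j <;> simp [Matrix.single]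

lemma ΨΦ_id : (Ψ m).comp (Φ m) = AlgHom.id ℂ _ := by
  apply CliffordAlgebra.hom_ext
  apply LinearMap.ext
  intro z
  simp [ΨΦ_ι]

variable (m)

/-- The induction step equivalence. -/
def stepEquiv : CliffordAlgebra (Qf (m + 2)) ≃ₐ[ℂ]
    Matrix (Fin 2) (Fin 2) (CliffordAlgebra (Qf m)) :=
  AlgEquiv.ofAlgHom (Φ m) (Ψ m) (AlgHom.ext ΦΨ_id) ΨΦ_id

end Step6

section Assembly

/-- Product of algebra equivalences. -/
def algEquivProdCongr {R A B C D : Type*} [CommSemiring R] [Semiring A] [Semiring B] [Semiring C]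
    [Semiring D] [Algebra R A] [Algebra R B] [Algebra R C] [Algebra R D]
    (e₁ : A ≃ₐ[R] B) (e₂ : C ≃ₐ[R] D) : (A × C) ≃ₐ[R] (B × D) :=
  AlgEquiv.ofAlgHom (e₁.toAlgHom.prodMap e₂.toAlgHom) (e₁.symm.toAlgHom.prodMap e₂.symm.toAlgHom)
    (AlgHom.ext fun x => Prod.ext (by simp [AlgHom.prodMap]) (by simp [AlgHom.prodMap]))
    (AlgHom.ext fun x => Prod.ext (by simp [AlgHom.prodMap]) (by simp [AlgHom.prodMap]))

/-- Matrices over a product algebra. -/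
def matrixProdEquiv {R A B : Type*} (n : Type*) [Fintype n] [DecidableEq n] [CommSemiring R]
    [Semiring A] [Semiring B] [Algebra R A] [Algebra R B] :
    Matrix n n (A × B) ≃ₐ[R] Matrix n n A × Matrix n n B where
  toFun M := (M.map Prod.fst, M.map Prod.snd)
  invFun P := Matrix.of fun i j => (P.1 i j, P.2 i j)
  left_inv M := by ext i j <;> simp [Matrix.map_apply]
  right_inv P := by
    refine Prod.ext ?_ ?_ <;> ext i j <;> simp [Matrix.map_apply]
  map_mul' M N := by
    refine Prod.ext ?_ ?_ <;> ext i j <;>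
      simp [Matrix.map_apply, Matrix.mul_apply, Prod.fst_sum, Prod.snd_sum]
  map_add' M N := by
    refine Prod.ext ?_ ?_ <;> ext i j <;> simp [Matrix.map_apply]
  commutes' r := by
    refine Prod.ext ?_ ?_ <;> ext i j <;>
      simp [Matrix.map_apply, Matrix.algebraMap_eq_diagonal, Matrix.diagonal_apply,
        Prod.algebraMap_apply] <;> split <;> simp

/-- 1×1 matrices. -/
def matrixFinOne (R A : Type*) [CommSemiring R] [Semiring A] [Algebra R A] :
    Matrix (Fin 1) (Fin 1) A ≃ₐ[R] A where
  toFun M := M 0 0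
  invFun a := Matrix.of fun _ _ => a
  left_inv M := by
    ext i j
    fin_cases i <;> fin_cases j <;> simp
  right_inv a := rfl
  map_mul' M N := by simp [Matrix.mul_apply]
  map_add' M N := by simp
  commutes' r := by simp [Matrix.algebraMap_eq_diagonal]

lemma main (n : ℕ) : Nonempty (CliffordAlgebra (Qf (2*n+1)) ≃ₐ[ℂ]
    (Matrix (Fin (2^n)) (Fin (2^n)) ℂ × Matrix (Fin (2^n)) (Fin (2^n)) ℂ)) := by
  induction n with
  | zero =>
      exact ⟨equiv1.trans
        (algEquivProdCongr (matrixFinOne ℂ ℂ).symm (matrixFinOne ℂ ℂ).symm)⟩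
  | succ n ih =>
      obtain ⟨e⟩ := ih
      have hm : 2*(n+1)+1 = 2*n+1+2 := by ring
      rw [hm]
      have hfin : Fin 2 × Fin (2^n) ≃ Fin (2^(n+1)) :=
        finProdFinEquiv.trans (finCongr (by rw [pow_succ]; ring))
      have big : Matrix (Fin 2) (Fin 2) (Matrix (Fin (2^n)) (Fin (2^n)) ℂ) ≃ₐ[ℂ]
          Matrix (Fin (2^(n+1))) (Fin (2^(n+1))) ℂ :=
        (Matrix.compAlgEquiv (Fin 2) (Fin (2^n)) ℂ ℂ).trans (Matrix.reindexAlgEquiv ℂ ℂ hfin)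
      exact ⟨(stepEquiv (2*n+1)).trans ((e.mapMatrix).trans
        ((matrixProdEquiv (Fin 2)).trans (algEquivProdCongr big big)))⟩

end Assembly

/-- The complex Clifford algebra of the standard quadratic form
`Q(z) = ∑ zᵢ²` on `ℂ^{2n+1}` is isomorphic as a `ℂ`-algebra to
`M_{2ⁿ}(ℂ) ⊕ M_{2ⁿ}(ℂ)`. -/
theorem stmt17 (n : ℕ) (Q : QuadraticForm ℂ (Fin (2 * n + 1) → ℂ))
    (hQ : ∀ z : Fin (2 * n + 1) → ℂ, Q z = ∑ i, z i ^ 2) :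
    Nonempty (CliffordAlgebra Q ≃ₐ[ℂ]
      (Matrix (Fin (2 ^ n)) (Fin (2 ^ n)) ℂ × Matrix (Fin (2 ^ n)) (Fin (2 ^ n)) ℂ)) := by
  have hQ' : Q = Qf (2*n+1) := QuadraticMap.ext fun z => by rw [hQ, Qf_apply]
  rw [hQ']
  exact main n
end
end

section
/- Let n ≥ 1 and let p, q ∈ M_n(ℂ) be projections, i.e., p = p* = p² and q = q* = q². Then p and q are homotopic through projections — there exists a continuous path γ : [0,1] → M_n(ℂ) with γ(0) = p, γ(1) = q, and γ(t) = γ(t)* = γ(t)² for all t — if and only if rank(p) = rank(q). -/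
open unitInterval
open Matrix Complex

private lemma stmt19_eig01 {n : ℕ} (p : Matrix (Fin n) (Fin n) ℂ) (hp : p.IsHermitian) (hp2 : p * p = p)
    (i : Fin n) : hp.eigenvalues i = 0 ∨ hp.eigenvalues i = 1 := by
  set U : Matrix (Fin n) (Fin n) ℂ := (hp.eigenvectorUnitary : Matrix (Fin n) (Fin n) ℂ) with hU
  have hU1 : U * star U = 1 := Matrix.mem_unitaryGroup_iff.mp hp.eigenvectorUnitary.2
  have hD : star U * p * U = diagonal (RCLike.ofReal ∘ hp.eigenvalues : Fin n → ℂ) := by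
    have := hp.conjStarAlgAut_star_eigenvectorUnitary
    simpa using this
  have hDD : diagonal (RCLike.ofReal ∘ hp.eigenvalues : Fin n → ℂ) * diagonal (RCLike.ofReal ∘ hp.eigenvalues : Fin n → ℂ)
      = diagonal (RCLike.ofReal ∘ hp.eigenvalues : Fin n → ℂ) := by
    rw [← hD]
    calc (star U * p * U) * (star U * p * U) = star U * p * (U * star U) * p * U := by noncomm_ring
    _ = star U * (p * p) * U := by rw [hU1]; noncomm_ring
    _ = star U * p * U := by rw [hp2]
  rw [diagonal_mul_diagonal] at hDD
  have := congrFun (congrFun hDD i) i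
  simp [diagonal] at this
  have h2 : (hp.eigenvalues i : ℂ) * (hp.eigenvalues i : ℂ) = (hp.eigenvalues i : ℂ) := this
  have h3 : (hp.eigenvalues i : ℂ) * ((hp.eigenvalues i : ℂ) - 1) = 0 := by ring_nf; linear_combination h2
  rcases mul_eq_zero.mp h3 with h | h
  · left; exact_mod_cast h
  · right; have : (hp.eigenvalues i : ℂ) = 1 := by linear_combination h
    exact_mod_cast this

private lemma stmt19_trace_eq_rank {n : ℕ} (p : Matrix (Fin n) (Fin n) ℂ)
    (hp1 : star p = p) (hp2 : p * p = p) :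
    p.trace = (p.rank : ℂ) := by
  have hp : p.IsHermitian := hp1
  have e01 : ∀ i, hp.eigenvalues i = 0 ∨ hp.eigenvalues i = 1 := stmt19_eig01 p hp hp2
  have htr : p.trace = ∑ i, (hp.eigenvalues i : ℂ) := by
    conv_lhs => rw [hp.spectral_theorem]
    rw [Unitary.conjStarAlgAut_apply, Matrix.trace_mul_comm, ← mul_assoc, Matrix.mem_unitaryGroup_iff'.mp hp.eigenvectorUnitary.2,
      one_mul, Matrix.trace_diagonal]
    rfl
  have hrk : p.rank = Fintype.card {i // hp.eigenvalues i ≠ 0} := hp.rank_eq_card_non_zero_eigs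
  rw [htr, hrk, Fintype.card_subtype, Finset.card_filter]
  push_cast
  apply Finset.sum_congr rfl
  intro i _
  rcases e01 i with h | h <;> simp [h]

open scoped ComplexOrder in
private lemma stmt19_det_ne {n : ℕ} (V : Matrix (Fin n) (Fin n) ℂ) (hV1 : star V * V = 1)
    (x y : ℂ) (hxy : normSq x ≠ normSq y) :
    det (x • (1 : Matrix (Fin n) (Fin n) ℂ) + y • V) ≠ 0 := by
  intro hdet
  obtain ⟨v, hv, hveq⟩ := (Matrix.exists_mulVec_eq_zero_iff).mpr hdet
  have h1 : x • v + y • (V *ᵥ v) = 0 := by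
    simpa [Matrix.add_mulVec, Matrix.smul_mulVec, Matrix.one_mulVec] using hveq
  have hiso : star (V *ᵥ v) ⬝ᵥ (V *ᵥ v) = star v ⬝ᵥ v := by
    rw [Matrix.star_mulVec, Matrix.dotProduct_mulVec, Matrix.vecMul_vecMul,
      ← Matrix.star_eq_conjTranspose, hV1, Matrix.vecMul_one]
  have h2 : y • (V *ᵥ v) = -(x • v) := eq_neg_of_add_eq_zero_right h1
  have h3 : star (y • (V *ᵥ v)) ⬝ᵥ (y • (V *ᵥ v)) = star (x • v) ⬝ᵥ (x • v) := by
    rw [h2]; simp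
  have h4 : (normSq y : ℂ) * (star v ⬝ᵥ v) = (normSq x : ℂ) * (star v ⬝ᵥ v) := by
    simp only [star_smul, smul_dotProduct, dotProduct_smul, hiso, smul_eq_mul,
      Complex.star_def] at h3
    calc (normSq y : ℂ) * (star v ⬝ᵥ v) = y * ((starRingEnd ℂ) y * (star v ⬝ᵥ v)) := by
          rw [← mul_assoc, Complex.mul_conj]
      _ = x * ((starRingEnd ℂ) x * (star v ⬝ᵥ v)) := h3
      _ = (normSq x : ℂ) * (star v ⬝ᵥ v) := by
          rw [← mul_assoc, Complex.mul_conj]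
  have h5 : star v ⬝ᵥ v = 0 := by
    by_contra h
    apply hxy
    have := mul_right_cancel₀ h h4
    exact_mod_cast this.symm
  exact hv (dotProduct_star_self_eq_zero.mp h5)

private lemma stmt19_exists_good_c {n : ℕ} (W : Matrix (Fin n) (Fin n) ℂ) :
    ∃ θ : ℝ, det ((Complex.exp (θ * Complex.I)) • (1 : Matrix (Fin n) (Fin n) ℂ) + W) ≠ 0 := by
  classical
  set Bad : Set ℂ := {z : ℂ | det (z • (1 : Matrix (Fin n) (Fin n) ℂ) + W) = 0} with hBad
  have hsub : Bad ⊆ (fun z => -z) '' (spectrum ℂ W) := by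
    intro z hz
    refine ⟨-z, ?_, by simp⟩
    rw [spectrum.mem_iff]
    intro hUnit
    rw [Matrix.isUnit_iff_isUnit_det, isUnit_iff_ne_zero] at hUnit
    apply hUnit
    have : algebraMap ℂ (Matrix (Fin n) (Fin n) ℂ) (-z) - W = -(z • 1 + W) := by
      rw [Algebra.algebraMap_eq_smul_one]
      module
    rw [this, Matrix.det_neg, hz]
    simp
  have hfin : Bad.Finite := ((Matrix.finite_spectrum W).image _).subset hsub
  have hinj : Set.InjOn (fun θ : ℝ => Complex.exp (θ * Complex.I)) (Set.Ico 0 (2 * Real.pi)) := by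
    intro a ha b hb hab
    simp only at hab
    rw [Complex.exp_eq_exp_iff_exists_int] at hab
    obtain ⟨k, hk⟩ := hab
    have : (a : ℂ) = (b : ℂ) + k * (2 * Real.pi) := by
      have hI : ((a : ℂ) - b - k * (2 * Real.pi)) * Complex.I = 0 := by
        ring_nf
        ring_nf at hk
        linear_combination hk
      rcases mul_eq_zero.mp hI with h | h
      · linear_combination h
      · exact absurd h Complex.I_ne_zero
    have hr : a = b + k * (2 * Real.pi) := by exact_mod_cast this
    have hpi := Real.pi_pos
    obtain ⟨ha0, ha2⟩ := ha
    obtain ⟨hb0, hb2⟩ := hb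
    have hk0 : k = 0 := by
      rcases lt_trichotomy k 0 with h | h | h
      · have : (k : ℝ) ≤ -1 := by exact_mod_cast (by omega : k ≤ -1)
        nlinarith
      · exact h
      · have : (1 : ℝ) ≤ k := by exact_mod_cast h
        nlinarith
    rw [hk0] at hr; simpa using hr
  have hIco : (Set.Ico (0:ℝ) (2 * Real.pi)).Infinite :=
    Set.Ico_infinite (by positivity)
  have himg := (hIco.image hinj).diff hfin
  obtain ⟨z, hzmem, hzbad⟩ := himg.nonempty
  obtain ⟨θ, _, rfl⟩ := hzmem
  exact ⟨θ, hzbad⟩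

private lemma stmt19_conj_exp_mul_I (r : ℝ) :
    (starRingEnd ℂ) (Complex.exp (r * Complex.I)) * Complex.exp (r * Complex.I) = 1 := by
  rw [← Complex.exp_conj, ← Complex.exp_add]
  have : (starRingEnd ℂ) ((r : ℂ) * Complex.I) + (r : ℂ) * Complex.I = 0 := by
    simp [_root_.map_mul, Complex.conj_I, Complex.conj_ofReal]
  rw [this, Complex.exp_zero]

private lemma stmt19_unitary_path {n : ℕ} (W : Matrix (Fin n) (Fin n) ℂ)
    (hW1 : star W * W = 1) (hW2 : W * star W = 1) :
    ∃ u : unitInterval → Matrix (Fin n) (Fin n) ℂ, Continuous u ∧ u 0 = 1 ∧ u 1 = W ∧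
      ∀ t, star (u t) * u t = 1 ∧ u t * star (u t) = 1 := by
  obtain ⟨θ, hθ⟩ := stmt19_exists_good_c W
  set c : ℂ := Complex.exp (θ * Complex.I) with hc
  have hcc : (starRingEnd ℂ) c * c = 1 := stmt19_conj_exp_mul_I θ
  have hc0 : c ≠ 0 := Complex.exp_ne_zero _
  set V : Matrix (Fin n) (Fin n) ℂ := c⁻¹ • W with hV
  have hV1 : star V * V = 1 := by
    rw [hV, star_smul, smul_mul_assoc, mul_smul_comm, smul_smul, hW1]
    have h1 : star (c⁻¹) * c⁻¹ = 1 := by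
      rw [Complex.star_def, map_inv₀, ← mul_inv, hcc, inv_one]
    rw [h1, one_smul]
  have hdetV : det ((1 : Matrix (Fin n) (Fin n) ℂ) + V) ≠ 0 := by
    have h1 : (1 : Matrix (Fin n) (Fin n) ℂ) + V = c⁻¹ • (c • 1 + W) := by
      rw [smul_add, smul_smul, inv_mul_cancel₀ hc0, one_smul]
    rw [h1, det_smul]
    exact mul_ne_zero (pow_ne_zero _ (inv_ne_zero hc0)) hθ
  set A : unitInterval → Matrix (Fin n) (Fin n) ℂ :=
    fun t => (1 - ((t : ℝ) : ℂ)) • 1 + (1 + ((t : ℝ) : ℂ)) • V with hA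
  set B : unitInterval → Matrix (Fin n) (Fin n) ℂ :=
    fun t => (1 + ((t : ℝ) : ℂ)) • 1 + (1 - ((t : ℝ) : ℂ)) • V with hB
  have hns : ∀ t : unitInterval, normSq (1 - ((t : ℝ) : ℂ)) = (1 - (t:ℝ))^2 ∧
      normSq (1 + ((t : ℝ) : ℂ)) = (1 + (t:ℝ))^2 := by
    intro t
    constructor
    · rw [show (1 - ((t : ℝ) : ℂ)) = (((1 - (t:ℝ) : ℝ)) : ℂ) by push_cast; ring,
        Complex.normSq_ofReal]; ring
    · rw [show (1 + ((t : ℝ) : ℂ)) = (((1 + (t:ℝ) : ℝ)) : ℂ) by push_cast; ring,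
        Complex.normSq_ofReal]; ring
  have ht01 : ∀ t : unitInterval, (t:ℝ) = 0 ∨ ((0:ℝ) < t ∧ (t:ℝ) ≤ 1) := by
    intro t
    rcases eq_or_lt_of_le t.2.1 with h | h
    · exact Or.inl h.symm
    · exact Or.inr ⟨h, t.2.2⟩
  have hdetA : ∀ t, det (A t) ≠ 0 := by
    intro t
    rcases ht01 t with h | ⟨h1, h2⟩
    · simp only [hA, h]
      simpa using hdetV
    · apply stmt19_det_ne V hV1
      rw [(hns t).1, (hns t).2]
      nlinarith
  have hdetB : ∀ t, det (B t) ≠ 0 := by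
    intro t
    rcases ht01 t with h | ⟨h1, h2⟩
    · simp only [hB, h]
      simpa using hdetV
    · apply stmt19_det_ne V hV1
      rw [(hns t).1, (hns t).2]
      nlinarith
  have hsA : ∀ t, star (A t) = (1 - ((t : ℝ) : ℂ)) • 1 + (1 + ((t : ℝ) : ℂ)) • star V := by
    intro t
    simp [hA, star_add, star_smul, Complex.star_def, _root_.map_sub, _root_.map_add, _root_.map_one,
      Complex.conj_ofReal]
  have hsB : ∀ t, star (B t) = (1 + ((t : ℝ) : ℂ)) • 1 + (1 - ((t : ℝ) : ℂ)) • star V := by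
    intro t
    simp [hB, star_add, star_smul, Complex.star_def, _root_.map_sub, _root_.map_add, _root_.map_one,
      Complex.conj_ofReal]
  have hAA : ∀ t, star (A t) * A t = star (B t) * B t := by
    intro t
    rw [hsA t, hsB t]
    simp only [hA, hB, add_mul, mul_add, smul_mul_assoc, mul_smul_comm, smul_smul,
      mul_one, one_mul, hV1]
    module
  set e : unitInterval → ℂ := fun t => Complex.exp ((((t : ℝ)) : ℂ) * (θ * Complex.I)) with he
  have hee : ∀ t, (starRingEnd ℂ) (e t) * e t = 1 := by
    intro t
    have : (((t : ℝ)) : ℂ) * (θ * Complex.I) = (((t : ℝ) * θ : ℝ) : ℂ) * Complex.I := by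
      push_cast; ring
    rw [he]; simp only [this]; exact stmt19_conj_exp_mul_I _
  refine ⟨fun t => e t • (A t * (B t)⁻¹), ?_, ?_, ?_, ?_⟩
  · -- continuity
    have hcont_val : Continuous fun t : unitInterval => ((t : ℝ) : ℂ) :=
      Complex.continuous_ofReal.comp continuous_subtype_val
    have hcontA : Continuous A :=
      ((continuous_const.sub hcont_val).smul continuous_const).add
        ((continuous_const.add hcont_val).smul continuous_const)
    have hcontB : Continuous B :=
      ((continuous_const.add hcont_val).smul continuous_const).add
        ((continuous_const.sub hcont_val).smul continuous_const)
    have hcontBinv : Continuous fun t => (B t)⁻¹ := by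
      rw [continuous_iff_continuousAt]
      intro t
      have h1 : ContinuousAt Ring.inverse (det (B t)) := by
        rw [Ring.inverse_eq_inv']
        exact continuousAt_inv₀ (hdetB t)
      exact (continuousAt_matrix_inv (B t) h1).comp hcontB.continuousAt
    have hconte : Continuous e :=
      Complex.continuous_exp.comp (hcont_val.mul continuous_const)
    exact hconte.smul (hcontA.matrix_mul hcontBinv)
  · -- t = 0
    have h0 : ((0 : unitInterval) : ℝ) = 0 := rfl
    have hAB0 : A 0 = B 0 := by simp [hA, hB, h0]
    have he0 : e 0 = 1 := by simp [he, h0]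
    show e 0 • (A 0 * (B 0)⁻¹) = 1
    rw [he0, one_smul, hAB0, mul_nonsing_inv _ (isUnit_iff_ne_zero.mpr (hdetB 0))]
  · -- t = 1
    have h1 : ((1 : unitInterval) : ℝ) = 1 := rfl
    have he1 : e 1 = c := by rw [he]; simp [h1, hc]
    have hA1 : A 1 = (2 : ℂ) • V := by
      simp only [hA, h1]
      norm_num
    have hB1inv : (B 1)⁻¹ = ((2 : ℂ)⁻¹) • 1 := by
      apply inv_eq_right_inv
      simp only [hB, h1]
      norm_num
      rw [smul_smul]
      norm_num
    show e 1 • (A 1 * (B 1)⁻¹) = W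
    rw [he1, hA1, hB1inv, smul_mul_assoc, mul_smul_comm, smul_smul, smul_smul, mul_one]
    norm_num
    rw [hV, smul_smul]
    rw [show c * 2 * (1 / 2) * c⁻¹ = c * c⁻¹ by ring, mul_inv_cancel₀ hc0, one_smul]
  · -- unitarity
    intro t
    have hb : IsUnit (B t).det := isUnit_iff_ne_zero.mpr (hdetB t)
    have ha : IsUnit (A t).det := isUnit_iff_ne_zero.mpr (hdetA t)
    have hsb : IsUnit (star (B t)).det := by
      rw [Matrix.star_eq_conjTranspose, Matrix.det_conjTranspose]
      exact isUnit_iff_ne_zero.mpr (by simpa using hdetB t)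
    have hsa : IsUnit (star (A t)).det := by
      rw [Matrix.star_eq_conjTranspose, Matrix.det_conjTranspose]
      exact isUnit_iff_ne_zero.mpr (by simpa using hdetA t)
    have hstarinv : star ((B t)⁻¹) = (star (B t))⁻¹ := by
      rw [Matrix.star_eq_conjTranspose, Matrix.star_eq_conjTranspose,
        Matrix.conjTranspose_nonsing_inv]
    have hstar_u : star (e t • (A t * (B t)⁻¹))
        = (starRingEnd ℂ) (e t) • ((star (B t))⁻¹ * star (A t)) := by
      rw [star_smul, Matrix.star_mul, hstarinv, Complex.star_def]
    constructor
    · rw [hstar_u, smul_mul_assoc, mul_smul_comm, smul_smul, hee t]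
      rw [one_smul]
      calc (star (B t))⁻¹ * star (A t) * (A t * (B t)⁻¹)
          = (star (B t))⁻¹ * (star (A t) * A t) * (B t)⁻¹ := by noncomm_ring
        _ = (star (B t))⁻¹ * (star (B t) * B t) * (B t)⁻¹ := by rw [hAA t]
        _ = ((star (B t))⁻¹ * star (B t)) * (B t * (B t)⁻¹) := by noncomm_ring
        _ = 1 := by rw [nonsing_inv_mul _ hsb, mul_nonsing_inv _ hb, one_mul]
    · rw [hstar_u, smul_mul_assoc, mul_smul_comm, smul_smul, mul_comm (e t) _, hee t]
      rw [one_smul]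
      have hrev : (B t)⁻¹ * (star (B t))⁻¹ = (star (A t) * A t)⁻¹ := by
        rw [← Matrix.mul_inv_rev, hAA t]
      calc A t * (B t)⁻¹ * ((star (B t))⁻¹ * star (A t))
          = A t * ((B t)⁻¹ * (star (B t))⁻¹) * star (A t) := by noncomm_ring
        _ = A t * (star (A t) * A t)⁻¹ * star (A t) := by rw [hrev]
        _ = A t * ((A t)⁻¹ * (star (A t))⁻¹) * star (A t) := by rw [Matrix.mul_inv_rev]
        _ = (A t * (A t)⁻¹) * ((star (A t))⁻¹ * star (A t)) := by noncomm_ring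
        _ = 1 := by rw [mul_nonsing_inv _ ha, nonsing_inv_mul _ hsa, one_mul]

private lemma stmt19_exists_perm {n : ℕ} (f g : Fin n → ℝ) (hf : ∀ i, f i = 0 ∨ f i = 1)
    (hg : ∀ i, g i = 0 ∨ g i = 1)
    (hcard : Fintype.card {i // f i ≠ 0} = Fintype.card {i // g i ≠ 0}) :
    ∃ τ : Equiv.Perm (Fin n), ∀ i, f (τ i) = g i := by
  classical
  have hcard2 : Fintype.card {i // ¬ g i ≠ 0} = Fintype.card {i // ¬ f i ≠ 0} := by
    rw [Fintype.card_subtype_compl (p := fun i => g i ≠ 0),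
      Fintype.card_subtype_compl (p := fun i => f i ≠ 0), hcard]
  let e1 : {i // g i ≠ 0} ≃ {i // f i ≠ 0} := Fintype.equivOfCardEq hcard.symm
  let e2 : {i // ¬ g i ≠ 0} ≃ {i // ¬ f i ≠ 0} := Fintype.equivOfCardEq hcard2
  refine ⟨(Equiv.sumCompl (fun i => g i ≠ 0)).symm.trans
    ((e1.sumCongr e2).trans (Equiv.sumCompl (fun i => f i ≠ 0))), ?_⟩
  intro i
  by_cases h : g i ≠ 0
  · have h1 : (Equiv.sumCompl (fun i => g i ≠ 0)).symm i = Sum.inl ⟨i, h⟩ :=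
      Equiv.sumCompl_symm_apply_of_pos (p := fun i => g i ≠ 0) (a := i) h
    simp only [Equiv.trans_apply, h1, Equiv.sumCongr_apply, Sum.map_inl,
      Equiv.sumCompl_apply_inl]
    have hfe : f ((e1 ⟨i, h⟩) : Fin n) ≠ 0 := (e1 ⟨i, h⟩).2
    rcases hf ((e1 ⟨i, h⟩) : Fin n) with h' | h'
    · exact absurd h' hfe
    · rcases hg i with h'' | h''
      · exact absurd h'' h
      · rw [h', h'']
  · have h1 : (Equiv.sumCompl (fun i => g i ≠ 0)).symm i = Sum.inr ⟨i, h⟩ :=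
      Equiv.sumCompl_symm_apply_of_neg (p := fun i => g i ≠ 0) (a := i) h
    simp only [Equiv.trans_apply, h1, Equiv.sumCongr_apply, Sum.map_inr,
      Equiv.sumCompl_apply_inr]
    have hfe : ¬ f ((e2 ⟨i, h⟩) : Fin n) ≠ 0 := (e2 ⟨i, h⟩).2
    push_neg at h hfe
    rw [hfe, h]

private lemma stmt19_exists_unitary_conj {n : ℕ} (p q : Matrix (Fin n) (Fin n) ℂ)
    (hp : star p = p ∧ p * p = p) (hq : star q = q ∧ q * q = q)
    (hrank : p.rank = q.rank) :
    ∃ V : Matrix (Fin n) (Fin n) ℂ, star V * V = 1 ∧ V * star V = 1 ∧ q = V * p * star V := by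
  classical
  have hP : p.IsHermitian := hp.1
  have hQ : q.IsHermitian := hq.1
  have hcard : Fintype.card {i // hP.eigenvalues i ≠ 0}
      = Fintype.card {i // hQ.eigenvalues i ≠ 0} := by
    rw [← hP.rank_eq_card_non_zero_eigs, ← hQ.rank_eq_card_non_zero_eigs, hrank]
  obtain ⟨τ, hτ⟩ := stmt19_exists_perm _ _ (stmt19_eig01 p hP hp.2) (stmt19_eig01 q hQ hq.2) hcard
  set Up : Matrix (Fin n) (Fin n) ℂ := (hP.eigenvectorUnitary : Matrix (Fin n) (Fin n) ℂ)
  set Uq : Matrix (Fin n) (Fin n) ℂ := (hQ.eigenvectorUnitary : Matrix (Fin n) (Fin n) ℂ)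
  have hUp1 : star Up * Up = 1 := Matrix.mem_unitaryGroup_iff'.mp hP.eigenvectorUnitary.2
  have hUp2 : Up * star Up = 1 := Matrix.mem_unitaryGroup_iff.mp hP.eigenvectorUnitary.2
  have hUq1 : star Uq * Uq = 1 := Matrix.mem_unitaryGroup_iff'.mp hQ.eigenvectorUnitary.2
  have hUq2 : Uq * star Uq = 1 := Matrix.mem_unitaryGroup_iff.mp hQ.eigenvectorUnitary.2
  set Dp : Matrix (Fin n) (Fin n) ℂ := diagonal (RCLike.ofReal ∘ hP.eigenvalues : Fin n → ℂ)
    with hDpdef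
  set Dq : Matrix (Fin n) (Fin n) ℂ := diagonal (RCLike.ofReal ∘ hQ.eigenvalues : Fin n → ℂ)
    with hDqdef
  have hDp : star Up * p * Up = Dp := by
    have := hP.conjStarAlgAut_star_eigenvectorUnitary
    rw [Unitary.conjStarAlgAut_star_apply] at this
    exact this
  have hqspec : q = Uq * Dq * star Uq := hQ.spectral_theorem
  set P : Matrix (Fin n) (Fin n) ℂ := (1 : Matrix (Fin n) (Fin n) ℂ).submatrix τ id with hPdef
  have hstarP : star P = (1 : Matrix (Fin n) (Fin n) ℂ).submatrix id τ := by
    rw [hPdef, Matrix.star_eq_conjTranspose, Matrix.conjTranspose_submatrix]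
    congr 1
    simp [Matrix.conjTranspose_one]
  have hPP1 : star P * P = 1 := by
    rw [hstarP, hPdef]
    rw [show ((1 : Matrix (Fin n) (Fin n) ℂ).submatrix id ⇑τ)
      = (1 : Matrix (Fin n) (Fin n) ℂ).submatrix (id : Fin n → Fin n) ⇑τ from rfl]
    rw [Matrix.one_submatrix_mul (id : Fin n → Fin n) τ
      ((1 : Matrix (Fin n) (Fin n) ℂ).submatrix ⇑τ id)]
    simp [Matrix.submatrix_submatrix]
  have hPP2 : P * star P = 1 := by
    rw [hstarP, hPdef]
    rw [show ((1 : Matrix (Fin n) (Fin n) ℂ).submatrix id ⇑τ)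
      = (1 : Matrix (Fin n) (Fin n) ℂ).submatrix ⇑(Equiv.refl (Fin n)) ⇑τ from rfl]
    rw [Matrix.mul_submatrix_one (Equiv.refl (Fin n)) τ]
    simp [Matrix.submatrix_submatrix, Matrix.submatrix_one_equiv]
  have hPDP : P * Dp * star P = Dq := by
    have hfun : (RCLike.ofReal ∘ hQ.eigenvalues : Fin n → ℂ)
        = (RCLike.ofReal ∘ hP.eigenvalues : Fin n → ℂ) ∘ τ := by
      funext i
      simp only [Function.comp_apply]
      exact congrArg _ (hτ i).symm
    have h1 : P * Dp = Dp.submatrix τ id := by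
      rw [hPdef, show ((1 : Matrix (Fin n) (Fin n) ℂ).submatrix ⇑τ id)
        = (1 : Matrix (Fin n) (Fin n) ℂ).submatrix ⇑τ ⇑(Equiv.refl (Fin n)) from rfl,
        Matrix.one_submatrix_mul τ (Equiv.refl (Fin n)) Dp]
      simp
    rw [h1, hstarP, show ((1 : Matrix (Fin n) (Fin n) ℂ).submatrix id ⇑τ)
        = (1 : Matrix (Fin n) (Fin n) ℂ).submatrix ⇑(Equiv.refl (Fin n)) ⇑τ from rfl,
      Matrix.mul_submatrix_one (Equiv.refl (Fin n)) τ]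
    rw [Matrix.submatrix_submatrix]
    have hgoal : Dp.submatrix (⇑τ ∘ id) (id ∘ ⇑(Equiv.refl (Fin n)).symm ∘ ⇑τ)
        = Dp.submatrix ⇑τ ⇑τ := rfl
    rw [hgoal, hDpdef, Matrix.submatrix_diagonal_equiv, hDqdef, hfun]
  refine ⟨Uq * P * star Up, ?_, ?_, ?_⟩
  · have h1 : star (Uq * P * star Up) = Up * star P * star Uq := by
      simp only [Matrix.star_mul, star_star, mul_assoc]
    rw [h1]
    calc Up * star P * star Uq * (Uq * P * star Up)
        = Up * star P * (star Uq * Uq) * P * star Up := by noncomm_ring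
      _ = Up * (star P * P) * star Up := by rw [hUq1]; noncomm_ring
      _ = Up * star Up := by rw [hPP1]; noncomm_ring
      _ = 1 := hUp2
  · have h1 : star (Uq * P * star Up) = Up * star P * star Uq := by
      simp only [Matrix.star_mul, star_star, mul_assoc]
    rw [h1]
    calc Uq * P * star Up * (Up * star P * star Uq)
        = Uq * P * (star Up * Up) * star P * star Uq := by noncomm_ring
      _ = Uq * (P * star P) * star Uq := by rw [hUp1]; noncomm_ring
      _ = Uq * star Uq := by rw [hPP2]; noncomm_ring
      _ = 1 := hUq2
  · have h1 : star (Uq * P * star Up) = Up * star P * star Uq := by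
      simp only [Matrix.star_mul, star_star, mul_assoc]
    rw [h1, eq_comm]
    calc Uq * P * star Up * p * (Up * star P * star Uq)
        = Uq * (P * (star Up * p * Up) * star P) * star Uq := by noncomm_ring
      _ = Uq * (P * Dp * star P) * star Uq := by rw [hDp]
      _ = Uq * Dq * star Uq := by rw [hPDP]
      _ = q := hqspec.symm

/-- Two projections `p, q ∈ Mₙ(ℂ)` are homotopic through projections
(there is a continuous path of projections from `p` to `q`) if and only if they have
the same rank. -/
theorem stmt19 {n : ℕ} (hn : 1 ≤ n) (p q : Matrix (Fin n) (Fin n) ℂ)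
    (hp : star p = p ∧ p * p = p) (hq : star q = q ∧ q * q = q) :
    (∃ γ : unitInterval → Matrix (Fin n) (Fin n) ℂ, Continuous γ ∧
        γ 0 = p ∧ γ 1 = q ∧ ∀ t, star (γ t) = γ t ∧ γ t * γ t = γ t) ↔
      p.rank = q.rank := by
  constructor
  · rintro ⟨γ, hc, hγ0, hγ1, hproj⟩
    have hf : Continuous fun t => (γ t).trace := hc.matrix_trace
    have key : ∀ t, (γ t).trace = (((γ t).rank : ℕ) : ℂ) :=
      fun t => stmt19_trace_eq_rank _ (hproj t).1 (hproj t).2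
    have hlc : IsLocallyConstant fun t => (γ t).rank := by
      rw [IsLocallyConstant.iff_exists_open]
      intro x
      refine ⟨(fun t => (γ t).trace) ⁻¹' Metric.ball ((γ x).trace) 1,
        hf.isOpen_preimage _ Metric.isOpen_ball, by simp, ?_⟩
      intro y hy
      by_contra hne
      have hd : dist ((γ y).trace) ((γ x).trace) < 1 := hy
      rw [key x, key y, Complex.dist_eq] at hd
      have hcast : ((((γ y).rank : ℤ) - ((γ x).rank : ℤ) : ℤ) : ℂ)
          = ((γ y).rank : ℂ) - ((γ x).rank : ℂ) := by push_cast; ring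
      rw [← hcast, Complex.norm_intCast] at hd
      have hne' : (((γ y).rank : ℤ) - ((γ x).rank : ℤ)) ≠ 0 := by
        simp only [sub_ne_zero]; exact_mod_cast hne
      have h1 := Int.one_le_abs hne'
      have h2 : (1 : ℝ) ≤ |((((γ y).rank : ℤ) - ((γ x).rank : ℤ) : ℤ) : ℝ)| := by
        rw [← Int.cast_abs]; exact_mod_cast h1
      linarith
    have := hlc.apply_eq_of_preconnectedSpace 0 1
    rw [hγ0, hγ1] at this
    exact this
  · intro hrank
    obtain ⟨V, hV1, hV2, hV3⟩ := stmt19_exists_unitary_conj p q hp hq hrank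
    obtain ⟨u, huc, hu0, hu1, huU⟩ := stmt19_unitary_path V hV1 hV2
    refine ⟨fun t => u t * p * star (u t), ?_, ?_, ?_, ?_⟩
    · exact (huc.matrix_mul continuous_const).matrix_mul huc.matrix_conjTranspose
    · show u 0 * p * star (u 0) = p
      rw [hu0]; simp
    · show u 1 * p * star (u 1) = q
      rw [hu1]; exact hV3.symm
    · intro t
      constructor
      · show star (u t * p * star (u t)) = u t * p * star (u t)
        rw [Matrix.star_mul, Matrix.star_mul, star_star, hp.1, mul_assoc]
      · show u t * p * star (u t) * (u t * p * star (u t)) = u t * p * star (u t)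
        calc u t * p * star (u t) * (u t * p * star (u t))
            = u t * (p * (star (u t) * u t) * p) * star (u t) := by noncomm_ring
          _ = u t * (p * p) * star (u t) := by rw [(huU t).1]; noncomm_ring
          _ = u t * p * star (u t) := by rw [hp.2]
end
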